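/- arXiv:2004.02365 — 4 statements merged into one kernel-verified Lean document; each statement's English description precedes it below -/
import Mathlib

section
/- Let 0 < α < 1, ψ be a C¹ increasing function with ψ' never zero, and f ∈ C¹[a,b]. Then I^{α,ψ}_{a+}[^C D^{α,ψ}_{a+} f](t) = f(t) − f(a) for all t ∈ [a,b]. -/
open Real

noncomputable def psiInt (α : ℝ) (ψ : ℝ → ℝ) (a : ℝ) (f : ℝ → ℝ) (t : ℝ) : ℝ :=
  (1 / Real.Gamma α) * ∫ τ in a..t, deriv ψ τ * (ψ t - ψ τ) ^ (α - 1) * f τ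

noncomputable def caputo (α : ℝ) (ψ : ℝ → ℝ) (a : ℝ) (f : ℝ → ℝ) : ℝ → ℝ :=
  psiInt (1 - α) ψ a (fun τ => deriv f τ / deriv ψ τ)

noncomputable def ML (α z : ℝ) : ℝ := ∑' m : ℕ, z ^ m / Real.Gamma (m * α + 1)

open MeasureTheory intervalIntegral Set

lemma betaReal {α : ℝ} (h0 : 0 < α) (h1 : α < 1) :
    ∫ x in (0:ℝ)..1, x ^ (-α) * (1 - x) ^ (α - 1) = Real.Gamma (1 - α) * Real.Gamma α := by
  have hs : 0 < Complex.re (1 - α) := by simp; linarith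
  have ht : 0 < Complex.re (α : ℂ) := by simp [h0]
  have key := Complex.Gamma_mul_Gamma_eq_betaIntegral hs ht
  rw [sub_add_cancel, Complex.Gamma_one, one_mul] at key
  have h2 : Complex.betaIntegral (1 - α) α
      = ((∫ x in (0:ℝ)..1, x ^ (-α) * (1 - x) ^ (α - 1) : ℝ) : ℂ) := by
    rw [Complex.betaIntegral, ← intervalIntegral.integral_ofReal]
    apply intervalIntegral.integral_congr
    intro x hx
    rw [Set.uIcc_of_le (by norm_num : (0:ℝ) ≤ 1)] at hx
    push_cast
    rw [Complex.ofReal_cpow hx.1, Complex.ofReal_cpow (by linarith [hx.2] : (0:ℝ) ≤ 1 - x)]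
    push_cast
    ring_nf
  rw [h2] at key
  have := key.symm
  rw [show ((1:ℂ) - α) = ((1 - α : ℝ) : ℂ) by push_cast; ring, Complex.Gamma_ofReal,
    Complex.Gamma_ofReal] at this
  exact_mod_cast this

lemma intRpowSub {r : ℝ} (hr : -1 < r) (p q : ℝ) (hpq : p ≤ q) :
    ∫ u in p..q, (q - u) ^ r = (q - p) ^ (r + 1) / (r + 1) := by
  rw [intervalIntegral.integral_comp_sub_left (fun v => v ^ r) q, sub_self,
    integral_rpow (Or.inl hr), Real.zero_rpow (by linarith)]
  ring

lemma betaPQ {α : ℝ} (h0 : 0 < α) (h1 : α < 1) (p q : ℝ) (hpq : p < q) :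
    ∫ u in p..q, (q - u) ^ (α - 1) * (u - p) ^ (-α)
      = Real.Gamma (1 - α) * Real.Gamma α := by
  have hc : (0:ℝ) < q - p := by linarith
  have h1' := intervalIntegral.integral_comp_add_right
    (a := 0) (b := q - p) (fun u => (q - u) ^ (α - 1) * (u - p) ^ (-α)) p
  simp only [zero_add, sub_add_cancel, add_sub_cancel_right] at h1'
  rw [← h1']
  have h2 := intervalIntegral.smul_integral_comp_mul_left
    (a := 0) (b := 1) (fun v => (q - (v + p)) ^ (α - 1) * v ^ (-α)) (q - p)
  simp only [mul_zero, mul_one] at h2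
  rw [← h2, smul_eq_mul]
  have h3 : (∫ x in (0:ℝ)..1, (q - ((q-p) * x + p)) ^ (α - 1) * ((q-p) * x) ^ (-α))
      = (q-p) ^ (α - 1) * (q-p) ^ (-α) * ∫ x in (0:ℝ)..1, x ^ (-α) * (1 - x) ^ (α - 1) := by
    rw [← intervalIntegral.integral_const_mul]
    apply intervalIntegral.integral_congr
    intro x hx
    rw [Set.uIcc_of_le (by norm_num : (0:ℝ) ≤ 1)] at hx
    dsimp only
    have e1 : q - ((q-p) * x + p) = (q-p) * (1 - x) := by ring
    rw [e1, Real.mul_rpow hc.le (by linarith [hx.2]), Real.mul_rpow hc.le hx.1]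
    ring
  rw [h3, betaReal h0 h1]
  rw [show (q-p) * ((q-p)^(α-1) * (q-p)^(-α) * (Real.Gamma (1-α) * Real.Gamma α))
      = ((q-p)^(1:ℝ) * (q-p)^(α-1) * (q-p)^(-α)) * (Real.Gamma (1-α) * Real.Gamma α) by
    rw [Real.rpow_one]; ring]
  rw [← Real.rpow_add hc, ← Real.rpow_add hc]
  norm_num

lemma intOnRpowMul {r s : ℝ} (hr : -1 < r) (hs : -1 < s) (p q : ℝ) (hpq : p < q) :
    IntegrableOn (fun u => (q - u) ^ r * (u - p) ^ s) (Set.Ioo p q) := by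
  set m := (p + q) / 2 with hm
  have hpm : p < m := by rw [hm]; linarith
  have hmq : m < q := by rw [hm]; linarith
  have mr : Measurable fun x : ℝ => x ^ r := by measurability
  have ms : Measurable fun x : ℝ => x ^ s := by measurability
  have meas : Measurable (fun u : ℝ => (q - u) ^ r * (u - p) ^ s) :=
    (mr.comp (measurable_const.sub measurable_id)).mul
      (ms.comp (measurable_id.sub measurable_const))
  have half1 : IntegrableOn (fun u => (q - u) ^ r * (u - p) ^ s) (Set.Ioo p m) := by
    have base0 := (intervalIntegral.intervalIntegrable_rpow' hs (a := 0)
      (b := m - p)).comp_sub_right p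
    simp only [zero_add, sub_add_cancel] at base0
    have base : IntegrableOn (fun u => (u - p) ^ s) (Set.Ioo p m) := by
      rw [intervalIntegrable_iff_integrableOn_Ioo_of_le hpm.le] at base0
      exact base0
    apply Integrable.mono' (base.const_mul ((q - m) ^ r ⊔ (q - p) ^ r))
      meas.aestronglyMeasurable.restrict
    filter_upwards [ae_restrict_mem measurableSet_Ioo] with u hu
    rw [norm_mul, Real.norm_rpow_of_nonneg (by linarith [hu.2, hmq]),
      Real.norm_rpow_of_nonneg (by linarith [hu.1]), Real.norm_of_nonneg (by linarith [hu.2, hmq]),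
      Real.norm_of_nonneg (by linarith [hu.1])]
    have key : (q - u) ^ r ≤ (q - m) ^ r ⊔ (q - p) ^ r := by
      rcases le_or_gt r 0 with h | h
      · exact le_sup_of_le_left (Real.rpow_le_rpow_of_nonpos (by linarith [hu.2]) (by linarith [hu.2]) h)
      · exact le_sup_of_le_right (Real.rpow_le_rpow (by linarith [hu.2, hmq]) (by linarith [hu.1]) h.le)
    calc (q - u) ^ r * (u - p) ^ s
        ≤ ((q - m) ^ r ⊔ (q - p) ^ r) * (u - p) ^ s :=
          mul_le_mul_of_nonneg_right key (Real.rpow_nonneg (by linarith [hu.1]) s)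
      _ = ((q - m) ^ r ⊔ (q - p) ^ r) * (u - p) ^ s := rfl
  have half2 : IntegrableOn (fun u => (q - u) ^ r * (u - p) ^ s) (Set.Ico m q) := by
    have base0 := (intervalIntegral.intervalIntegrable_rpow' hr (a := 0)
      (b := q - m)).comp_sub_left q
    simp only [sub_zero, sub_sub_cancel] at base0
    replace base0 := base0.symm
    have base : IntegrableOn (fun u => (q - u) ^ r) (Set.Ioo m q) := by
      rw [intervalIntegrable_iff_integrableOn_Ioo_of_le hmq.le] at base0
      exact base0
    have base' : IntegrableOn (fun u => (q - u) ^ r) (Set.Ico m q) := by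
      have h0 : IntegrableOn (fun u => (q - u) ^ r) ({m} ∪ Set.Ioo m q) :=
        ((integrableOn_singleton_iff enorm_ne_top).2 (Or.inr (by simp))).union base
      apply h0.mono_set
      intro x hx
      rcases eq_or_lt_of_le hx.1 with h | h
      · exact Or.inl (by simp [h.symm])
      · exact Or.inr ⟨h, hx.2⟩
    apply Integrable.mono' (base'.const_mul ((m - p) ^ s ⊔ (q - p) ^ s))
      meas.aestronglyMeasurable.restrict
    filter_upwards [ae_restrict_mem measurableSet_Ico] with u hu
    rw [norm_mul, Real.norm_rpow_of_nonneg (by linarith [hu.2]),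
      Real.norm_rpow_of_nonneg (by linarith [hpm, hu.1]),
      Real.norm_of_nonneg (by linarith [hu.2]), Real.norm_of_nonneg (by linarith [hpm, hu.1])]
    have key : (u - p) ^ s ≤ (m - p) ^ s ⊔ (q - p) ^ s := by
      rcases le_or_gt s 0 with h | h
      · exact le_sup_of_le_left (Real.rpow_le_rpow_of_nonpos (by linarith [hpm]) (by linarith [hu.1]) h)
      · exact le_sup_of_le_right (Real.rpow_le_rpow (by linarith [hpm, hu.1]) (by linarith [hu.2]) h.le)
    calc (q - u) ^ r * (u - p) ^ s ≤ (q - u) ^ r * ((m - p) ^ s ⊔ (q - p) ^ s) :=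
          mul_le_mul_of_nonneg_left key (Real.rpow_nonneg (by linarith [hu.2]) r)
      _ = ((m - p) ^ s ⊔ (q - p) ^ s) * (q - u) ^ r := by ring
  exact (half1.union half2).mono_set (fun x hx => by
    rcases lt_or_ge x m with h | h
    · exact Or.inl ⟨hx.1, h⟩
    · exact Or.inr ⟨h, hx.2⟩)

lemma psi_image {ψ : ℝ → ℝ} {a b s t : ℝ} (hψ : Continuous ψ)
    (hmono : StrictMonoOn ψ (Set.Icc a b))
    (hs : a ≤ s) (hst : s < t) (htb : t ≤ b) : ψ '' Set.Ioo s t = Set.Ioo (ψ s) (ψ t) := by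
  apply Set.Subset.antisymm
  · rintro x ⟨y, hy, rfl⟩
    exact ⟨hmono ⟨hs, by linarith [hy.2]⟩ ⟨by linarith [hy.1], by linarith [hy.2]⟩ hy.1,
      hmono ⟨by linarith [hy.1], by linarith [hy.2]⟩ ⟨by linarith [hy.1], htb⟩ hy.2⟩
  · exact intermediate_value_Ioo hst.le hψ.continuousOn

lemma psi_subst {ψ : ℝ → ℝ} {a b s t : ℝ} (hψ : ContDiff ℝ 1 ψ)
    (hmono : StrictMonoOn ψ (Set.Icc a b)) (hpos : ∀ x ∈ Set.Icc a b, 0 < deriv ψ x)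
    (hs : a ≤ s) (hst : s < t) (htb : t ≤ b) (G : ℝ → ℝ) :
    ((∫ u in Set.Ioo (ψ s) (ψ t), G u) = ∫ τ in Set.Ioo s t, deriv ψ τ * G (ψ τ))
    ∧ (IntegrableOn G (Set.Ioo (ψ s) (ψ t))
        ↔ IntegrableOn (fun τ => deriv ψ τ * G (ψ τ)) (Set.Ioo s t)) := by
  have hsub : Set.Ioo s t ⊆ Set.Icc a b := fun x hx => ⟨by linarith [hx.1], by linarith [hx.2]⟩
  have hd : ∀ τ ∈ Set.Ioo s t, HasDerivWithinAt ψ (deriv ψ τ) (Set.Ioo s t) τ :=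
    fun τ _ => ((hψ.differentiable one_ne_zero) τ).hasDerivAt.hasDerivWithinAt
  have hinj : Set.InjOn ψ (Set.Ioo s t) := hmono.injOn.mono hsub
  have himg := psi_image hψ.continuous hmono hs hst htb
  have habs : ∀ τ ∈ Set.Ioo s t, |deriv ψ τ| = deriv ψ τ :=
    fun τ hτ => abs_of_pos (hpos τ (hsub hτ))
  constructor
  · rw [← himg, integral_image_eq_integral_abs_deriv_smul measurableSet_Ioo hd hinj]
    apply setIntegral_congr_fun measurableSet_Ioo
    intro τ hτ
    simp [habs τ hτ]
  · rw [← himg, integrableOn_image_iff_integrableOn_abs_deriv_smul measurableSet_Ioo hd hinj]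
    constructor
    · intro h
      apply h.congr_fun _ measurableSet_Ioo
      intro τ hτ; simp [habs τ hτ]
    · intro h
      apply h.congr_fun _ measurableSet_Ioo
      intro τ hτ; simp [habs τ hτ]

lemma deriv_pos_of_strictMono {ψ : ℝ → ℝ} {a b : ℝ} (hab : a < b) (hψ : ContDiff ℝ 1 ψ)
    (hmono : StrictMonoOn ψ (Set.Icc a b))
    (hψ' : ∀ x ∈ Set.Icc a b, deriv ψ x ≠ 0) :
    ∀ x ∈ Set.Icc a b, 0 < deriv ψ x := by
  have hcont : Continuous (deriv ψ) := hψ.continuous_deriv le_rfl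
  have interior_nonneg : ∀ x ∈ Set.Ioo a b, 0 ≤ deriv ψ x := by
    intro x hx
    have hx' := ((hψ.differentiable one_ne_zero) x).hasDerivAt
    have tend : Filter.Tendsto (slope ψ x) (nhdsWithin x (Set.Ioi x)) (nhds (deriv ψ x)) :=
      (hasDerivAt_iff_tendsto_slope.1 hx').mono_left
        (nhdsWithin_mono x (fun y hy => ne_of_gt hy))
    apply ge_of_tendsto tend
    filter_upwards [Ioo_mem_nhdsGT_of_mem ⟨le_refl x, hx.2⟩] with y hy
    rw [slope_def_field]
    apply div_nonneg _ (by linarith [hy.1])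
    have := hmono ⟨hx.1.le, hx.2.le⟩ ⟨by linarith [hx.1, hy.1], hy.2.le⟩ hy.1
    linarith
  have closed : ∀ x ∈ Set.Icc a b, 0 ≤ deriv ψ x := by
    have h1 : Set.Icc a b = closure (Set.Ioo a b) := (closure_Ioo hab.ne).symm
    rw [h1]
    intro x hx
    have : closure (Set.Ioo a b) ⊆ {y | 0 ≤ deriv ψ y} :=
      closure_minimal interior_nonneg (isClosed_le continuous_const hcont)
    exact this hx
  intro x hx
  exact lt_of_le_of_ne (closed x hx) (Ne.symm (hψ' x hx))


set_option maxHeartbeats 2000000 in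
theorem stmt3 (a b : ℝ) (ψ : ℝ → ℝ) (hψ : ContDiff ℝ 1 ψ)
    (hmono : StrictMonoOn ψ (Set.Icc a b))
    (hψ' : ∀ x ∈ Set.Icc a b, deriv ψ x ≠ 0)
    (α : ℝ) (hα : 0 < α) (hα1 : α < 1)
    (f : ℝ → ℝ) (hf : ContDiffOn ℝ 1 f (Set.Icc a b)) :
    ∀ t ∈ Set.Icc a b, psiInt α ψ a (caputo α ψ a f) t = f t - f a := by
  intro t ht
  rcases eq_or_lt_of_le ht.1 with rfl | hat
  · simp [psiInt]
  have htb : t ≤ b := ht.2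
  have hab : a < b := lt_of_lt_of_le hat htb
  -- basic facts
  have hpos : ∀ x ∈ Set.Icc a b, 0 < deriv ψ x := deriv_pos_of_strictMono hab hψ hmono hψ'
  have hDcont : Continuous (deriv ψ) := hψ.continuous_deriv le_rfl
  have hψc : Continuous ψ := hψ.continuous
  obtain ⟨x₀, hx₀, hmin'⟩ := isCompact_Icc.exists_isMinOn (Set.nonempty_Icc.2 hab.le)
    hDcont.continuousOn
  have hmin : ∀ x ∈ Set.Icc a b, deriv ψ x₀ ≤ deriv ψ x := fun x hx => hmin' hx
  set m := deriv ψ x₀ with hmdef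
  have hm : 0 < m := hpos x₀ hx₀
  have hmle : ∀ x ∈ Set.Icc a b, m ≤ deriv ψ x := hmin
  set g₀ := derivWithin f (Set.Icc a b) with hg₀def
  have hg₀cont : ContinuousOn g₀ (Set.Icc a b) :=
    hf.continuousOn_derivWithin (uniqueDiffOn_Icc hab) le_rfl
  obtain ⟨M, hM⟩ := isCompact_Icc.exists_bound_of_continuousOn hg₀cont
  have hM0 : 0 ≤ M := le_trans (norm_nonneg _) (hM a ⟨le_rfl, hab.le⟩)
  have hgg₀ : ∀ s ∈ Set.Ioo a b, deriv f s = g₀ s :=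
    fun s hs => (derivWithin_of_mem_nhds (Icc_mem_nhds hs.1 hs.2)).symm
  have hgM : ∀ s ∈ Set.Ioo a b, ‖deriv f s‖ ≤ M := by
    intro s hs; rw [hgg₀ s hs]; exact hM s ⟨hs.1.le, hs.2.le⟩
  have hgmeas : Measurable (deriv f) := measurable_deriv f
  have hm1 : Measurable fun x : ℝ => x ^ (α - 1) := by measurability
  have hm2 : Measurable fun x : ℝ => x ^ (-α) := by measurability
  have hΓα : Real.Gamma α ≠ 0 := by
    apply Real.Gamma_ne_zero
    intro n
    have : (0:ℝ) ≤ n := Nat.cast_nonneg n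
    intro h; linarith
  have hΓ1 : Real.Gamma (1 - α) ≠ 0 := by
    apply Real.Gamma_ne_zero
    intro n
    have : (0:ℝ) ≤ n := Nat.cast_nonneg n
    intro h; linarith
  have hψmem : ∀ x, a ≤ x → x ≤ t → x ∈ Set.Icc a b := fun x h1 h2 => ⟨h1, le_trans h2 htb⟩
  have hψab : ψ a < ψ t := hmono ⟨le_rfl, hab.le⟩ (hψmem t hat.le le_rfl) hat
  -- Step 1: unfold, cancel ψ'
  have key1 : psiInt α ψ a (caputo α ψ a f) t
      = (1 / Real.Gamma α) * ((1 / Real.Gamma (1 - α)) *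
        ∫ τ in a..t, deriv ψ τ * (ψ t - ψ τ) ^ (α - 1) *
          ∫ s in a..τ, (ψ τ - ψ s) ^ (-α) * deriv f s) := by
    rw [psiInt]
    congr 1
    rw [← intervalIntegral.integral_const_mul]
    apply intervalIntegral.integral_congr
    intro τ hτ
    rw [Set.uIcc_of_le hat.le] at hτ
    dsimp only
    rw [caputo, psiInt]
    have inner : (∫ s in a..τ, deriv ψ s * (ψ τ - ψ s) ^ (1 - α - 1) * (deriv f s / deriv ψ s))
        = ∫ s in a..τ, (ψ τ - ψ s) ^ (-α) * deriv f s := by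
      apply intervalIntegral.integral_congr
      intro s hs
      rw [Set.uIcc_of_le hτ.1] at hs
      have hD : deriv ψ s ≠ 0 := hψ' s (hψmem s hs.1 (le_trans hs.2 hτ.2))
      dsimp only
      rw [show (1:ℝ) - α - 1 = -α by ring]
      field_simp
    rw [inner]; ring
  -- Step 2: interval integrals to Ioo set integrals
  have key2 : (∫ τ in a..t, deriv ψ τ * (ψ t - ψ τ) ^ (α - 1) *
        ∫ s in a..τ, (ψ τ - ψ s) ^ (-α) * deriv f s)
      = ∫ τ in Set.Ioo a t, deriv ψ τ * (ψ t - ψ τ) ^ (α - 1) *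
        ∫ s in Set.Ioo a τ, (ψ τ - ψ s) ^ (-α) * deriv f s := by
    rw [intervalIntegral.integral_of_le hat.le, integral_Ioc_eq_integral_Ioo]
    apply setIntegral_congr_fun measurableSet_Ioo
    intro τ hτ
    dsimp only
    rw [intervalIntegral.integral_of_le hτ.1.le, integral_Ioc_eq_integral_Ioo]
  -- the kernel and the triangle
  set T : Set (ℝ × ℝ) := {p : ℝ × ℝ | a < p.2 ∧ p.2 < p.1 ∧ p.1 < t} with hTdef
  have hTmeas : MeasurableSet T := by
    apply IsOpen.measurableSet
    exact (isOpen_lt continuous_const continuous_snd).inter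
      ((isOpen_lt continuous_snd continuous_fst).inter
        (isOpen_lt continuous_fst continuous_const))
  set kf : ℝ × ℝ → ℝ := fun p => deriv ψ p.1 * (ψ t - ψ p.1) ^ (α - 1) *
    ((ψ p.1 - ψ p.2) ^ (-α) * deriv f p.2) with hkdef
  have hkmeas : Measurable kf := by
    apply Measurable.mul
    · exact (hDcont.comp continuous_fst).measurable.mul
        (hm1.comp ((continuous_const.sub (hψc.comp continuous_fst)).measurable))
    · exact (hm2.comp (((hψc.comp continuous_fst).sub (hψc.comp continuous_snd)).measurable)).mul
        (hgmeas.comp measurable_snd)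
  -- sections
  have sectIn : ∀ τ ∈ Set.Ioo a t, ∀ s,
      T.indicator kf (τ, s) = (Set.Ioo a τ).indicator (fun s => kf (τ, s)) s := by
    intro τ hτ s
    by_cases hs : s ∈ Set.Ioo a τ
    · rw [Set.indicator_of_mem hs, Set.indicator_of_mem (show (τ, s) ∈ T from ⟨hs.1, hs.2, hτ.2⟩)]
    · rw [Set.indicator_of_notMem hs, Set.indicator_of_notMem
        (fun hc => hs ⟨hc.1, hc.2.1⟩)]
  have sectOut : ∀ τ, τ ∉ Set.Ioo a t → ∀ s, T.indicator kf (τ, s) = 0 := by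
    intro τ hτ s
    apply Set.indicator_of_notMem
    intro hc
    exact hτ ⟨lt_trans hc.1 hc.2.1, hc.2.2⟩
  have sectS : ∀ s ∈ Set.Ioo a t, ∀ τ,
      T.indicator kf (τ, s) = (Set.Ioo s t).indicator (fun τ => kf (τ, s)) τ := by
    intro s hs τ
    by_cases hτ : τ ∈ Set.Ioo s t
    · rw [Set.indicator_of_mem hτ, Set.indicator_of_mem (show (τ, s) ∈ T from ⟨hs.1, hτ.1, hτ.2⟩)]
    · rw [Set.indicator_of_notMem hτ, Set.indicator_of_notMem
        (fun hc => hτ ⟨hc.2.1, hc.2.2⟩)]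
  have sectSOut : ∀ s, s ∉ Set.Ioo a t → ∀ τ, T.indicator kf (τ, s) = 0 := by
    intro s hs τ
    apply Set.indicator_of_notMem
    intro hc
    exact hs ⟨hc.1, lt_trans hc.2.1 hc.2.2⟩
  -- integrability of ψ'-weighted kernel in s
  have hLint : ∀ τ ∈ Set.Ioo a t, IntegrableOn
      (fun s => deriv ψ s * (ψ τ - ψ s) ^ (-α)) (Set.Ioo a τ) := by
    intro τ hτ
    have hτb : τ ≤ b := le_trans hτ.2.le htb
    have hiff := (psi_subst hψ hmono hpos le_rfl hτ.1 hτb (fun u => (ψ τ - u) ^ (-α))).2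
    apply hiff.1
    have hψaτ : ψ a < ψ τ := hmono ⟨le_rfl, hab.le⟩ ⟨hτ.1.le, hτb⟩ hτ.1
    have base := intOnRpowMul (r := -α) (s := 0) (by linarith) (by linarith) (ψ a) (ψ τ) hψaτ
    simpa [Real.rpow_zero] using base
  -- integrability of kernel in s (with deriv f)
  have hkInt : ∀ τ ∈ Set.Ioo a t, IntegrableOn (fun s => kf (τ, s)) (Set.Ioo a τ) := by
    intro τ hτ
    have hτb : τ ≤ b := le_trans hτ.2.le htb
    rw [hkdef]
    dsimp only
    apply Integrable.const_mul
    have hmeasL : AEStronglyMeasurable (fun s => (ψ τ - ψ s) ^ (-α) * deriv f s)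
        (volume.restrict (Set.Ioo a τ)) :=
      ((hm2.comp (measurable_const.sub hψc.measurable)).mul hgmeas).aestronglyMeasurable.restrict
    apply Integrable.mono' ((hLint τ hτ).const_mul (M / m)) hmeasL
    filter_upwards [ae_restrict_mem measurableSet_Ioo] with s hs
    have hsb : s ∈ Set.Ioo a b := ⟨hs.1, lt_of_lt_of_le hs.2 (le_trans hτ.2.le htb)⟩
    have hDs : m ≤ deriv ψ s := hmle s ⟨hsb.1.le, hsb.2.le⟩
    have hψsτ : ψ s ≤ ψ τ :=
      hmono.monotoneOn ⟨hsb.1.le, hsb.2.le⟩ ⟨(lt_trans hs.1 hs.2).le, hτb⟩ hs.2.le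
    have hL0 : (0:ℝ) ≤ (ψ τ - ψ s) ^ (-α) := Real.rpow_nonneg (by linarith) _
    rw [norm_mul, Real.norm_of_nonneg hL0]
    have hg : ‖deriv f s‖ ≤ M := hgM s hsb
    have step : (ψ τ - ψ s) ^ (-α) * ‖deriv f s‖ ≤ M / m * (deriv ψ s * (ψ τ - ψ s) ^ (-α)) := by
      rw [div_mul_eq_mul_div, le_div_iff₀ hm]
      nlinarith [mul_le_mul_of_nonneg_left hg hL0,
        mul_le_mul_of_nonneg_right hDs (mul_nonneg hL0 hM0)]
    exact step
  -- section integrability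
  have hsecInt : ∀ τ, Integrable (fun s => T.indicator kf (τ, s)) := by
    intro τ
    by_cases hτ : τ ∈ Set.Ioo a t
    · have : (fun s => T.indicator kf (τ, s))
          = (Set.Ioo a τ).indicator (fun s => kf (τ, s)) := funext (sectIn τ hτ)
      rw [this, integrable_indicator_iff measurableSet_Ioo]
      exact hkInt τ hτ
    · have : (fun s => T.indicator kf (τ, s)) = fun _ => (0:ℝ) := funext (sectOut τ hτ)
      rw [this]
      exact integrable_zero _ _ _
  -- K integrable on (a,t)
  have hKint : IntegrableOn (fun τ => deriv ψ τ * (ψ t - ψ τ) ^ (α - 1)) (Set.Ioo a t) := by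
    have hiff := (psi_subst hψ hmono hpos le_rfl hat htb (fun u => (ψ t - u) ^ (α - 1))).2
    apply hiff.1
    have base := intOnRpowMul (r := α - 1) (s := 0) (by linarith) (by linarith) (ψ a) (ψ t) hψab
    simpa [Real.rpow_zero] using base
  -- bound for the norm integral
  set C : ℝ := M / m * ((ψ b - ψ a) ^ (1 - α) / (1 - α)) with hCdef
  have hIntBound : ∀ τ ∈ Set.Ioo a t, (∫ s, ‖T.indicator kf (τ, s)‖)
      ≤ C * (deriv ψ τ * (ψ t - ψ τ) ^ (α - 1)) := by
    intro τ hτ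
    have hτb : τ ≤ b := le_trans hτ.2.le htb
    have hKτ0 : (0:ℝ) ≤ deriv ψ τ * (ψ t - ψ τ) ^ (α - 1) :=
      mul_nonneg (hpos τ ⟨hτ.1.le.trans (le_refl τ), hτb⟩).le (Real.rpow_nonneg
        (by
          have : ψ τ ≤ ψ t := (hmono ⟨hτ.1.le, hτb⟩ ⟨hat.le, htb⟩ hτ.2).le
          linarith) _)
    have e1 : (∫ s, ‖T.indicator kf (τ, s)‖) = ∫ s in Set.Ioo a τ, ‖kf (τ, s)‖ := by
      simp only [sectIn τ hτ]
      rw [← MeasureTheory.integral_indicator measurableSet_Ioo]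
      congr 1
      funext s
      rw [norm_indicator_eq_indicator_norm]
    rw [e1]
    have hmono' : ∀ s ∈ Set.Ioo a τ, ‖kf (τ, s)‖
        ≤ (M / m * (deriv ψ τ * (ψ t - ψ τ) ^ (α - 1))) * (deriv ψ s * (ψ τ - ψ s) ^ (-α)) := by
      intro s hs
      have hsb : s ∈ Set.Ioo a b := ⟨hs.1, lt_of_lt_of_le hs.2 hτb⟩
      have hDs : m ≤ deriv ψ s := hmle s ⟨hsb.1.le, hsb.2.le⟩
      have hψsτ : ψ s ≤ ψ τ := (hmono ⟨hsb.1.le, hsb.2.le⟩ ⟨hs.1.le.trans hs.2.le, hτb⟩ hs.2).le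
      have hL0 : (0:ℝ) ≤ (ψ τ - ψ s) ^ (-α) := Real.rpow_nonneg (by linarith) _
      have hg : ‖deriv f s‖ ≤ M := hgM s hsb
      rw [hkdef]
      dsimp only
      rw [norm_mul, Real.norm_of_nonneg hKτ0, norm_mul, Real.norm_of_nonneg hL0]
      have step : (ψ τ - ψ s) ^ (-α) * ‖deriv f s‖
          ≤ M / m * (deriv ψ s * (ψ τ - ψ s) ^ (-α)) := by
        rw [div_mul_eq_mul_div, le_div_iff₀ hm]
        nlinarith [mul_le_mul_of_nonneg_left hg hL0,
          mul_le_mul_of_nonneg_right hDs (mul_nonneg hL0 hM0)]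
      calc deriv ψ τ * (ψ t - ψ τ) ^ (α - 1) * ((ψ τ - ψ s) ^ (-α) * ‖deriv f s‖)
          ≤ deriv ψ τ * (ψ t - ψ τ) ^ (α - 1) * (M / m * (deriv ψ s * (ψ τ - ψ s) ^ (-α))) :=
            mul_le_mul_of_nonneg_left step hKτ0
        _ = (M / m * (deriv ψ τ * (ψ t - ψ τ) ^ (α - 1))) * (deriv ψ s * (ψ τ - ψ s) ^ (-α)) := by
            ring
    have hint1 : IntegrableOn (fun s => ‖kf (τ, s)‖) (Set.Ioo a τ) := (hkInt τ hτ).norm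
    have hint2 : IntegrableOn
        (fun s => (M / m * (deriv ψ τ * (ψ t - ψ τ) ^ (α - 1))) * (deriv ψ s * (ψ τ - ψ s) ^ (-α)))
        (Set.Ioo a τ) := (hLint τ hτ).const_mul _
    have := setIntegral_mono_on hint1 hint2 measurableSet_Ioo hmono'
    apply le_trans this
    rw [MeasureTheory.integral_const_mul]
    -- compute ∫ s in Ioo a τ, deriv ψ s * (ψ τ - ψ s) ^ (-α)
    have hψaτ : ψ a < ψ τ := hmono ⟨le_rfl, hab.le⟩ ⟨hτ.1.le, hτb⟩ hτ.1
    have hsubeq := (psi_subst hψ hmono hpos le_rfl hτ.1 hτb (fun u => (ψ τ - u) ^ (-α))).1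
    have hval : (∫ s in Set.Ioo a τ, deriv ψ s * (ψ τ - ψ s) ^ (-α))
        = (ψ τ - ψ a) ^ (1 - α) / (1 - α) := by
      rw [← hsubeq, ← integral_Ioc_eq_integral_Ioo, ← intervalIntegral.integral_of_le hψaτ.le]
      rw [intRpowSub (by linarith : (-1:ℝ) < -α) _ _ hψaτ.le]
      ring_nf
    rw [hval]
    have hψτb : ψ τ ≤ ψ b := hmono.monotoneOn ⟨hτ.1.le, hτb⟩ ⟨hab.le, le_rfl⟩ hτb
    have hXY : (ψ τ - ψ a) ^ (1 - α) ≤ (ψ b - ψ a) ^ (1 - α) :=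
      Real.rpow_le_rpow (by linarith) (by linarith) (by linarith)
    have h1α : (0:ℝ) < 1 - α := by linarith
    have hMm : (0:ℝ) ≤ M / m := div_nonneg hM0 hm.le
    calc (M / m * (deriv ψ τ * (ψ t - ψ τ) ^ (α - 1))) * ((ψ τ - ψ a) ^ (1 - α) / (1 - α))
        ≤ (M / m * (deriv ψ τ * (ψ t - ψ τ) ^ (α - 1))) * ((ψ b - ψ a) ^ (1 - α) / (1 - α)) :=
          mul_le_mul_of_nonneg_left (by gcongr) (mul_nonneg hMm hKτ0)
      _ = C * (deriv ψ τ * (ψ t - ψ τ) ^ (α - 1)) := by rw [hCdef]; ring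
  -- full integrability on the product
  have hFmeasAE : AEStronglyMeasurable (T.indicator kf) (volume.prod volume) :=
    (hkmeas.indicator hTmeas).aestronglyMeasurable
  have hFint : Integrable (T.indicator kf) (volume.prod volume) := by
    rw [MeasureTheory.integrable_prod_iff hFmeasAE]
    constructor
    · exact Filter.Eventually.of_forall hsecInt
    · have hdom : Integrable ((Set.Ioo a t).indicator
          (fun τ => C * (deriv ψ τ * (ψ t - ψ τ) ^ (α - 1)))) := by
        rw [integrable_indicator_iff measurableSet_Ioo]
        exact hKint.const_mul C
      apply Integrable.mono' hdom hFmeasAE.norm.integral_prod_right'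
      apply Filter.Eventually.of_forall
      intro τ
      by_cases hτ : τ ∈ Set.Ioo a t
      · rw [Real.norm_of_nonneg (MeasureTheory.integral_nonneg (fun s => norm_nonneg _)),
          Set.indicator_of_mem hτ]
        exact hIntBound τ hτ
      · simp only [sectOut τ hτ, norm_zero, MeasureTheory.integral_zero, Set.indicator_of_notMem hτ]
        exact le_refl 0
  -- Fubini
  have swap := MeasureTheory.integral_integral_swap
    (f := fun τ s => T.indicator kf (τ, s)) hFint
  -- identify LHS of swap
  have lhs_eq : (∫ τ, ∫ s, T.indicator kf (τ, s))
      = ∫ τ in Set.Ioo a t, deriv ψ τ * (ψ t - ψ τ) ^ (α - 1) *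
          ∫ s in Set.Ioo a τ, (ψ τ - ψ s) ^ (-α) * deriv f s := by
    have e : (fun τ => ∫ s, T.indicator kf (τ, s))
        = (Set.Ioo a t).indicator (fun τ => ∫ s in Set.Ioo a τ, kf (τ, s)) := by
      funext τ
      by_cases hτ : τ ∈ Set.Ioo a t
      · simp only [sectIn τ hτ]
        rw [MeasureTheory.integral_indicator measurableSet_Ioo, Set.indicator_of_mem hτ]
      · simp only [sectOut τ hτ, MeasureTheory.integral_zero, Set.indicator_of_notMem hτ]
    rw [e, MeasureTheory.integral_indicator measurableSet_Ioo]
    apply setIntegral_congr_fun measurableSet_Ioo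
    intro τ hτ
    dsimp only
    rw [hkdef]
    dsimp only
    rw [MeasureTheory.integral_const_mul]
  -- identify RHS of swap
  have rhs_eq : (∫ s, ∫ τ, T.indicator kf (τ, s))
      = ∫ s in Set.Ioo a t, (∫ τ in Set.Ioo s t,
          deriv ψ τ * ((ψ t - ψ τ) ^ (α - 1) * (ψ τ - ψ s) ^ (-α))) * deriv f s := by
    have e : (fun s => ∫ τ, T.indicator kf (τ, s))
        = (Set.Ioo a t).indicator (fun s => ∫ τ in Set.Ioo s t, kf (τ, s)) := by
      funext s
      by_cases hs : s ∈ Set.Ioo a t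
      · simp only [sectS s hs]
        rw [MeasureTheory.integral_indicator measurableSet_Ioo, Set.indicator_of_mem hs]
      · simp only [sectSOut s hs, MeasureTheory.integral_zero, Set.indicator_of_notMem hs]
    rw [e, MeasureTheory.integral_indicator measurableSet_Ioo]
    apply setIntegral_congr_fun measurableSet_Ioo
    intro s hs
    dsimp only
    have e2 : (fun τ => kf (τ, s)) = fun τ =>
        (deriv ψ τ * ((ψ t - ψ τ) ^ (α - 1) * (ψ τ - ψ s) ^ (-α))) * deriv f s := by
      funext τ
      rw [hkdef]
      dsimp only
      ring
    rw [e2, MeasureTheory.integral_mul_const]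
  -- Beta evaluation of the inner integral
  have hBeta : ∀ s ∈ Set.Ioo a t, (∫ τ in Set.Ioo s t,
      deriv ψ τ * ((ψ t - ψ τ) ^ (α - 1) * (ψ τ - ψ s) ^ (-α)))
      = Real.Gamma (1 - α) * Real.Gamma α := by
    intro s hs
    have hsb : s ∈ Set.Icc a b := ⟨hs.1.le, (lt_of_lt_of_le hs.2 htb).le⟩
    have hψst : ψ s < ψ t := hmono hsb ⟨hat.le, htb⟩ hs.2
    have hsubeq := (psi_subst hψ hmono hpos hs.1.le hs.2 htb
      (fun u => (ψ t - u) ^ (α - 1) * (u - ψ s) ^ (-α))).1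
    rw [← hsubeq, ← integral_Ioc_eq_integral_Ioo, ← intervalIntegral.integral_of_le hψst.le]
    exact betaPQ hα hα1 _ _ hψst
  -- FTC for f
  have hFTC : (∫ s in Set.Ioo a t, deriv f s) = f t - f a := by
    rw [← integral_Ioc_eq_integral_Ioo, ← intervalIntegral.integral_of_le hat.le]
    have hint : IntervalIntegrable (deriv f) volume a t := by
      rw [intervalIntegrable_iff_integrableOn_Ioo_of_le hat.le]
      have h1 : IntegrableOn g₀ (Set.Ioo a t) := by
        apply ((hg₀cont.mono (Set.Icc_subset_Icc le_rfl htb)).integrableOn_Icc).mono_set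
        exact Set.Ioo_subset_Icc_self
      apply h1.congr_fun _ measurableSet_Ioo
      intro s hsx
      exact (hgg₀ s ⟨hsx.1, lt_of_lt_of_le hsx.2 htb⟩).symm
    apply intervalIntegral.integral_eq_sub_of_hasDeriv_right_of_le hat.le
    · exact hf.continuousOn.mono (Set.Icc_subset_Icc le_rfl htb)
    · intro x hx
      have hxb : x ∈ Set.Ioo a b := ⟨hx.1, lt_of_lt_of_le hx.2 htb⟩
      have hdx : DifferentiableAt ℝ f x :=
        ((hf.differentiableOn one_ne_zero) x ⟨hxb.1.le, hxb.2.le⟩).differentiableAt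
          (Icc_mem_nhds hxb.1 hxb.2)
      exact hdx.hasDerivAt.hasDerivWithinAt
    · exact hint
  -- assemble
  rw [key1, key2, ← lhs_eq, swap, rhs_eq]
  have final : (∫ s in Set.Ioo a t, (∫ τ in Set.Ioo s t,
      deriv ψ τ * ((ψ t - ψ τ) ^ (α - 1) * (ψ τ - ψ s) ^ (-α))) * deriv f s)
      = Real.Gamma (1 - α) * Real.Gamma α * (f t - f a) := by
    rw [show (∫ s in Set.Ioo a t, (∫ τ in Set.Ioo s t,
        deriv ψ τ * ((ψ t - ψ τ) ^ (α - 1) * (ψ τ - ψ s) ^ (-α))) * deriv f s)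
        = ∫ s in Set.Ioo a t, Real.Gamma (1 - α) * Real.Gamma α * deriv f s from
      setIntegral_congr_fun measurableSet_Ioo (fun s hs => by rw [hBeta s hs])]
    rw [MeasureTheory.integral_const_mul, hFTC]
  rw [final]
  field_simp
end

section
/- Let 0 < α < 1, λ ∈ ℝ, and let ψ be a C¹ increasing function with ψ' never zero. Then the function f(t) = E_α(λ(ψ(t) − ψ(a))^α) satisfies ^C D^{α,ψ}_{a+} f(t) = λ f(t) for t > a, where E_α is the one-parameter Mittag-Leffler function. -/
open Real

open MeasureTheory Set Filter intervalIntegral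
open scoped Nat

lemma aux_block_sum (g : ℕ → ℝ) (N : ℕ) (hN : 0 < N) (n : ℕ) :
    ∑ m ∈ Finset.range (N * n), g (m / N) = N * ∑ q ∈ Finset.range n, g q := by
  induction n with
  | zero => simp
  | succ n ih =>
    rw [Nat.mul_succ, Finset.range_eq_Ico, ← Finset.sum_Ico_consecutive _ (Nat.zero_le _)
      (Nat.le_add_right _ _), ← Finset.range_eq_Ico, ih]
    have key : ∀ m ∈ Finset.Ico (N * n) (N * n + N), g (m / N) = g n := by
      intro m hm
      obtain ⟨h1, h2⟩ := Finset.mem_Ico.1 hm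
      have hdiv : m / N = n := by
        apply Nat.div_eq_of_lt_le
        · rw [Nat.mul_comm]; exact h1
        · rw [Nat.succ_mul, Nat.mul_comm n N]; exact h2
      rw [hdiv]
    rw [Finset.sum_congr rfl key, Finset.sum_const, Nat.card_Ico, Finset.sum_range_succ]
    simp only [Nat.add_sub_cancel_left, nsmul_eq_mul]
    ring

lemma aux_summable_div (E : ℝ) (hE : 0 ≤ E) (N : ℕ) (hN : 0 < N) :
    Summable (fun m : ℕ => E ^ (m / N) / (m / N) !) := by
  have hg : Summable (fun q : ℕ => E ^ q / q !) := Real.summable_pow_div_factorial E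
  have h0 : ∀ q : ℕ, 0 ≤ E ^ q / q ! := fun q => by positivity
  apply summable_of_sum_range_le (c := N * ∑' q : ℕ, E ^ q / q !) (fun m => h0 _)
  intro n
  calc ∑ m ∈ Finset.range n, E ^ (m / N) / (m / N) !
      ≤ ∑ m ∈ Finset.range (N * n), E ^ (m / N) / (m / N) ! := by
        apply Finset.sum_le_sum_of_subset_of_nonneg
        · exact Finset.range_subset_range.2 (Nat.le_mul_of_pos_left n hN)
        · intro i _ _; exact h0 _
    _ = N * ∑ q ∈ Finset.range n, E ^ q / q ! := aux_block_sum (fun q => E ^ q / q !) N hN n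
    _ ≤ N * ∑' q : ℕ, E ^ q / q ! := by
        apply mul_le_mul_of_nonneg_left _ (Nat.cast_nonneg N)
        exact hg.sum_le_tsum _ (fun i _ => h0 i)

lemma aux_summable_gamma {α : ℝ} (hα : 0 < α) {d : ℝ} (hd : 0 ≤ d) :
    Summable (fun m : ℕ => (m + 1 : ℝ) * d ^ m / Real.Gamma (m * α + 1)) := by
  obtain ⟨N, hN1, hNα⟩ : ∃ N : ℕ, 0 < N ∧ 1 ≤ (N : ℝ) * α := by
    refine ⟨⌈1 / α⌉₊ + 1, Nat.succ_pos _, ?_⟩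
    have h1 : 1 / α ≤ ((⌈1 / α⌉₊ : ℝ) + 1) := by linarith [Nat.le_ceil (1 / α)]
    have h2 : ((⌈1 / α⌉₊ + 1 : ℕ) : ℝ) = (⌈1 / α⌉₊ : ℝ) + 1 := by push_cast; ring
    rw [h2]
    calc (1:ℝ) = (1 / α) * α := by field_simp
      _ ≤ ((⌈1 / α⌉₊ : ℝ) + 1) * α := mul_le_mul_of_nonneg_right h1 hα.le
  rw [← summable_nat_add_iff N]
  set C : ℝ := 2 * N * (max 1 d) ^ N with hC
  set E : ℝ := 2 * d ^ N with hE
  have hE0 : 0 ≤ E := by positivity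
  have hbig : Summable (fun m : ℕ => C * (E ^ ((m + N) / N) / ((m + N) / N) !)) :=
    Summable.mul_left _ ((aux_summable_div E hE0 N hN1).comp_injective (add_left_injective N))
  apply Summable.of_nonneg_of_le _ _ hbig
  · intro m
    have : 0 < Real.Gamma ((m + N : ℕ) * α + 1) := Real.Gamma_pos_of_pos (by positivity)
    positivity
  · intro m
    set q : ℕ := (m + N) / N with hq
    have hq1 : 1 ≤ q := (Nat.one_le_div_iff hN1).2 (Nat.le_add_left N m)
    have hmod : N * q + (m + N) % N = m + N := by rw [hq]; exact Nat.div_add_mod _ _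
    have hmodlt : (m + N) % N < N := Nat.mod_lt _ hN1
    have hNq : N * q ≤ m + N := by omega
    have hNq' : m + N ≤ N * q + N := by omega
    have hqle : (q : ℝ) ≤ ((m + N : ℕ) : ℝ) * α := by
      calc (q : ℝ) = q * 1 := (mul_one _).symm
        _ ≤ q * ((N : ℝ) * α) := mul_le_mul_of_nonneg_left hNα (Nat.cast_nonneg q)
        _ = ((N * q : ℕ) : ℝ) * α := by push_cast; ring
        _ ≤ ((m + N : ℕ) : ℝ) * α := by
            apply mul_le_mul_of_nonneg_right _ hα.le
            exact_mod_cast hNq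
    have hGamma : (q ! : ℝ) ≤ Real.Gamma (((m + N : ℕ) : ℝ) * α + 1) := by
      rw [← Real.Gamma_nat_eq_factorial]
      have hm1 : ((q : ℝ) + 1) ∈ Set.Ici (2:ℝ) := by
        simp only [Set.mem_Ici]
        have : (1:ℝ) ≤ q := by exact_mod_cast hq1
        linarith
      have hm2 : ((m + N : ℕ) : ℝ) * α + 1 ∈ Set.Ici (2:ℝ) := by
        simp only [Set.mem_Ici]
        have : (1:ℝ) ≤ q := by exact_mod_cast hq1
        linarith
      exact Real.Gamma_strictMonoOn_Ici.monotoneOn hm1 hm2 (by linarith)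
    -- numerator bound
    have hnum1 : ((m + N : ℕ) : ℝ) + 1 ≤ 2 * N * 2 ^ q := by
      have h2q : (q + 1 : ℕ) ≤ 2 ^ (q + 1) := Nat.lt_two_pow_self.le
      have h2q' : (q : ℝ) + 1 ≤ 2 * 2 ^ q := by
        have := (Nat.cast_le (α := ℝ)).2 h2q
        push_cast at this
        calc (q:ℝ) + 1 ≤ 2 ^ (q+1) := this
          _ = 2 * 2 ^ q := by rw [pow_succ]; ring
      have hmN : ((m + N : ℕ) : ℝ) + 1 ≤ N * (q + 1) := by
        have : (m + N : ℕ) + 1 ≤ N * (q + 1) := by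
          have hh : N * (q + 1) = N * q + N := by ring
          omega
        exact_mod_cast this
      calc ((m + N : ℕ) : ℝ) + 1 ≤ N * ((q:ℝ) + 1) := hmN
        _ ≤ N * (2 * 2 ^ q) := by
            apply mul_le_mul_of_nonneg_left h2q' (Nat.cast_nonneg N)
        _ = 2 * N * 2 ^ q := by ring
    have hnum2 : d ^ (m + N) ≤ (max 1 d) ^ N * (d ^ N) ^ q := by
      rcases le_total d 1 with hd1 | hd1
      · calc d ^ (m + N) ≤ d ^ (N * q) := pow_le_pow_of_le_one hd hd1 hNq
          _ = (d ^ N) ^ q := pow_mul d N q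
          _ = 1 * (d ^ N) ^ q := (one_mul _).symm
          _ ≤ (max 1 d) ^ N * (d ^ N) ^ q := by
              apply mul_le_mul_of_nonneg_right _ (by positivity)
              exact one_le_pow₀ (le_max_left 1 d)
      · calc d ^ (m + N) ≤ d ^ (N * q + N) := pow_le_pow_right₀ hd1 hNq'
          _ = d ^ N * (d ^ N) ^ q := by rw [pow_add, pow_mul]; ring
          _ ≤ (max 1 d) ^ N * (d ^ N) ^ q := by
              apply mul_le_mul_of_nonneg_right _ (by positivity)
              exact pow_le_pow_left₀ hd (le_max_right 1 d) N
    have hql : 0 < (q ! : ℝ) := by exact_mod_cast Nat.factorial_pos q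
    have hnonneg : 0 ≤ ((m + N : ℕ) : ℝ) + 1 := by positivity
    calc ((m + N : ℕ) + 1 : ℝ) * d ^ (m + N) / Real.Gamma ((m + N : ℕ) * α + 1)
        ≤ (2 * N * 2 ^ q) * ((max 1 d) ^ N * (d ^ N) ^ q) / (q !) := by
          apply div_le_div₀ (by positivity) _ hql hGamma
          exact mul_le_mul hnum1 hnum2 (by positivity) (by positivity)
      _ = C * (E ^ q / q !) := by
          rw [hC, hE, mul_pow]
          ring

lemma aux_summable_ml {α : ℝ} (hα : 0 < α) {d : ℝ} (hd : 0 ≤ d) :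
    Summable (fun m : ℕ => d ^ m / Real.Gamma (m * α + 1)) := by
  apply (aux_summable_gamma hα hd).of_nonneg_of_le
  · intro m
    have : 0 < Real.Gamma (m * α + 1) := Real.Gamma_pos_of_pos (by positivity)
    positivity
  · intro m
    have hG : 0 < Real.Gamma (m * α + 1) := Real.Gamma_pos_of_pos (by positivity)
    have h1 : d ^ m ≤ (m + 1 : ℝ) * d ^ m := by
      have h2 : (0:ℝ) ≤ (m : ℝ) := Nat.cast_nonneg m
      nlinarith [pow_nonneg hd m]
    exact (div_le_div_iff_of_pos_right hG).2 h1

lemma aux_ml_term {c y : ℝ} (hy : 0 ≤ y) (α : ℝ) (n : ℕ) :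
    (c * y ^ α) ^ n = c ^ n * y ^ ((n : ℝ) * α) := by
  rw [mul_pow, ← Real.rpow_natCast (y ^ α) n, ← Real.rpow_mul hy, mul_comm α (n : ℝ)]

lemma aux_beta {p q X : ℝ} (hp : 0 < p) (hq : 0 < q) (hX : 0 < X) :
    ∫ x in (0:ℝ)..X, x ^ (q - 1) * (X - x) ^ (p - 1) =
      Real.Gamma p * Real.Gamma q / Real.Gamma (p + q) * X ^ (p + q - 1) := by
  have hsc := Complex.betaIntegral_scaled (q : ℂ) (p : ℂ) hX
  have hbeta : Complex.betaIntegral q p =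
      Complex.Gamma (q : ℂ) * Complex.Gamma (p : ℂ) / Complex.Gamma ((q : ℂ) + (p : ℂ)) := by
    have hne : Complex.Gamma ((q : ℂ) + p) ≠ 0 := by
      apply Complex.Gamma_ne_zero_of_re_pos
      simp only [Complex.add_re, Complex.ofReal_re]
      linarith
    rw [eq_div_iff hne, mul_comm]
    exact (Complex.Gamma_mul_Gamma_eq_betaIntegral (by simpa using hq) (by simpa using hp)).symm
  have hlhs : (∫ x in (0:ℝ)..X, (x : ℂ) ^ ((q : ℂ) - 1) * ((X : ℂ) - x) ^ ((p : ℂ) - 1)) =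
      ((∫ x in (0:ℝ)..X, x ^ (q - 1) * (X - x) ^ (p - 1) : ℝ) : ℂ) := by
    rw [← intervalIntegral.integral_ofReal]
    apply intervalIntegral.integral_congr
    intro x hx
    rw [Set.uIcc_of_le hX.le] at hx
    show (x : ℂ) ^ ((q : ℂ) - 1) * ((X : ℂ) - x) ^ ((p : ℂ) - 1) =
      ((x ^ (q - 1) * (X - x) ^ (p - 1) : ℝ) : ℂ)
    rw [Complex.ofReal_mul, Complex.ofReal_cpow hx.1 (q - 1),
      Complex.ofReal_cpow (by linarith [hx.2] : (0:ℝ) ≤ X - x) (p - 1)]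
    push_cast
    ring
  have hXc : ((X : ℂ)) ^ ((q : ℂ) + (p : ℂ) - 1) = ((X ^ (q + p - 1) : ℝ) : ℂ) := by
    rw [Complex.ofReal_cpow hX.le]
    push_cast
    ring_nf
  rw [hlhs, hbeta, hXc] at hsc
  have hGammas : ((Real.Gamma p * Real.Gamma q / Real.Gamma (p + q) * X ^ (p + q - 1) : ℝ) : ℂ) =
      ((X ^ (q + p - 1) : ℝ) : ℂ) *
        (Complex.Gamma (q : ℂ) * Complex.Gamma (p : ℂ) / Complex.Gamma ((q : ℂ) + (p : ℂ))) := by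
    rw [show ((q : ℂ) + (p : ℂ)) = ((q + p : ℝ) : ℂ) by push_cast; ring]
    rw [Complex.Gamma_ofReal, Complex.Gamma_ofReal, Complex.Gamma_ofReal]
    rw [show q + p - 1 = p + q - 1 by ring, show q + p = p + q by ring]
    push_cast
    ring
  exact Complex.ofReal_injective (hsc.trans hGammas.symm)

lemma aux_beta' {p q A B : ℝ} (hp : 0 < p) (hq : 0 < q) (hAB : A < B) :
    ∫ s in A..B, (B - s) ^ (p - 1) * (s - A) ^ (q - 1) =
      Real.Gamma p * Real.Gamma q / Real.Gamma (p + q) * (B - A) ^ (p + q - 1) := by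
  have h := intervalIntegral.integral_comp_add_right (a := 0) (b := B - A)
    (fun s => (B - s) ^ (p - 1) * (s - A) ^ (q - 1)) A
  simp only [zero_add, sub_add_cancel] at h
  rw [← h]
  rw [← aux_beta hp hq (sub_pos.2 hAB)]
  apply intervalIntegral.integral_congr
  intro x _
  simp only
  rw [show B - (x + A) = (B - A) - x by ring, show x + A - A = x by ring]
  ring

lemma aux_integrable {p q A B : ℝ} (hp : 0 < p) (hq : 0 < q) (hAB : A < B) :
    IntervalIntegrable (fun s => (B - s) ^ (p - 1) * (s - A) ^ (q - 1)) volume A B := by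
  set M := (A + B) / 2 with hM
  have hAM : A < M := by rw [hM]; linarith
  have hMB : M < B := by rw [hM]; linarith
  have piece1 : IntervalIntegrable (fun s => (B - s) ^ (p - 1) * (s - A) ^ (q - 1)) volume A M := by
    have hint : IntervalIntegrable (fun s => (s - A) ^ (q - 1)) volume A M := by
      have := (intervalIntegrable_rpow' (a := 0) (b := M - A) (by linarith : (-1:ℝ) < q - 1)).comp_sub_right A
      simpa using this
    have hcont : ContinuousOn (fun s => (B - s) ^ (p - 1)) (Set.uIcc A M) := by
      apply ContinuousOn.rpow_const (by fun_prop)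
      intro x hx
      rw [Set.uIcc_of_le hAM.le] at hx
      exact Or.inl (by linarith [hx.2])
    have heq : (fun s => (B - s) ^ (p - 1) * (s - A) ^ (q - 1)) =
        fun s => (s - A) ^ (q - 1) * (B - s) ^ (p - 1) := funext fun s => mul_comm _ _
    rw [heq]
    exact hint.mul_continuousOn hcont
  have piece2 : IntervalIntegrable (fun s => (B - s) ^ (p - 1) * (s - A) ^ (q - 1)) volume M B := by
    have hint : IntervalIntegrable (fun s => (B - s) ^ (p - 1)) volume M B := by
      have := (intervalIntegrable_rpow' (a := 0) (b := B - M) (by linarith : (-1:ℝ) < p - 1)).comp_sub_left B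
      simpa using this.symm
    have hcont : ContinuousOn (fun s => (s - A) ^ (q - 1)) (Set.uIcc M B) := by
      apply ContinuousOn.rpow_const (by fun_prop)
      intro x hx
      rw [Set.uIcc_of_le hMB.le] at hx
      exact Or.inl (by nlinarith [hx.1])
    exact hint.mul_continuousOn hcont
  exact piece1.trans piece2

lemma aux_slope {ψ : ℝ → ℝ} (hm : Monotone ψ) {x d : ℝ} (h : HasDerivAt ψ d x) : 0 ≤ d := by
  have ht := hasDerivAt_iff_tendsto_slope.1 h
  refine ge_of_tendsto ht ?_
  filter_upwards [self_mem_nhdsWithin] with y hy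
  rcases lt_or_gt_of_ne hy with h' | h'
  · rw [slope_def_field, ← neg_div_neg_eq]
    apply div_nonneg
    · rw [neg_nonneg, sub_nonpos]; exact hm h'.le
    · rw [neg_nonneg, sub_nonpos]; exact h'.le
  · rw [slope_def_field]
    apply div_nonneg
    · rw [sub_nonneg]; exact hm h'.le
    · rw [sub_nonneg]; exact h'.le

lemma aux_hasDerivAt {α lam A : ℝ} (hα : 0 < α) {x : ℝ} (hx : A < x) :
    HasDerivAt
      (fun s : ℝ => ∑' m : ℕ, lam ^ m * (s - A) ^ ((m : ℝ) * α) / Real.Gamma (m * α + 1))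
      (∑' m : ℕ, lam ^ (m + 1) * (x - A) ^ (((m : ℝ) + 1) * α - 1) /
        Real.Gamma (((m : ℝ) + 1) * α)) x := by
  have hxA : 0 < x - A := sub_pos.2 hx
  obtain ⟨l, hl, hlx⟩ : ∃ l, 0 < l ∧ l < x - A := ⟨(x - A) / 2, by positivity, by linarith⟩
  obtain ⟨r, hr, hxr⟩ : ∃ r, 0 < r ∧ x - A < r := ⟨x - A + 1, by linarith, by linarith⟩
  set T : Set ℝ := Set.Ioo (A + l) (A + r) with hT
  have hxT : x ∈ T := ⟨by linarith, by linarith⟩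
  set g : ℕ → ℝ → ℝ := fun n s => lam ^ n * (s - A) ^ ((n : ℝ) * α) / Real.Gamma (n * α + 1)
    with hg
  set g' : ℕ → ℝ → ℝ :=
    fun n s => lam ^ n * (((n : ℝ) * α) * (s - A) ^ ((n : ℝ) * α - 1)) / Real.Gamma (n * α + 1)
    with hg'
  set d1 : ℝ := |lam| * l ^ α with hd1
  set d2 : ℝ := |lam| * r ^ α with hd2
  have hd1' : 0 ≤ d1 := by positivity
  have hd2' : 0 ≤ d2 := by positivity
  set u : ℕ → ℝ := fun n => α * ((n : ℝ) + 1) * (d1 ^ n / l + d2 ^ n / r) /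
      Real.Gamma ((n : ℝ) * α + 1) with hu
  have hGpos : ∀ n : ℕ, 0 < Real.Gamma ((n : ℝ) * α + 1) := fun n =>
    Real.Gamma_pos_of_pos (by positivity)
  have key : ∀ y : ℝ, 0 < y → ∀ n : ℕ,
      |lam| ^ n * y ^ ((n : ℝ) * α - 1) = (|lam| * y ^ α) ^ n / y := by
    intro y hy n
    rw [aux_ml_term hy.le, Real.rpow_sub hy, Real.rpow_one, mul_div_assoc]
  have husum : Summable u := by
    have h1 : Summable (fun n : ℕ => (α / l) * (((n : ℝ) + 1) * d1 ^ n /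
        Real.Gamma (n * α + 1)) + (α / r) * (((n : ℝ) + 1) * d2 ^ n /
        Real.Gamma (n * α + 1))) :=
      ((aux_summable_gamma hα hd1').mul_left _).add ((aux_summable_gamma hα hd2').mul_left _)
    apply h1.congr
    intro n
    have hGne := (hGpos n).ne'
    rw [hu]
    field_simp
  have hgderiv : ∀ n : ℕ, ∀ s ∈ T, HasDerivAt (g n) (g' n s) s := by
    intro n s hs
    have hsA : 0 < s - A := by
      have h1 := hs.1
      linarith [hs.1]
    have h1 : HasDerivAt (fun s : ℝ => (s - A) ^ ((n : ℝ) * α))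
        (((n : ℝ) * α) * (s - A) ^ ((n : ℝ) * α - 1)) s := by
      have hrpow := Real.hasDerivAt_rpow_const (x := s - A) (p := (n : ℝ) * α)
        (Or.inl hsA.ne')
      have hsub : HasDerivAt (fun s : ℝ => s - A) 1 s := (hasDerivAt_id s).sub_const A
      simpa [Function.comp_def] using hrpow.comp s hsub
    simpa [hg, hg', mul_div_assoc] using (h1.const_mul (lam ^ n)).div_const
      (Real.Gamma ((n : ℝ) * α + 1))
  have hbound : ∀ n : ℕ, ∀ s ∈ T, ‖g' n s‖ ≤ u n := by
    intro n s hs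
    obtain ⟨hs1, hs2⟩ := hs
    have hsl : l < s - A := by linarith
    have hsr : s - A < r := by linarith
    have hsA : 0 < s - A := lt_trans hl hsl
    have hG := hGpos n
    have habs : ‖g' n s‖ = (n : ℝ) * α * (|lam| ^ n * (s - A) ^ ((n : ℝ) * α - 1)) /
        Real.Gamma ((n : ℝ) * α + 1) := by
      rw [Real.norm_eq_abs, hg', abs_div, abs_mul, abs_pow, abs_of_nonneg
        (mul_nonneg (by positivity) (Real.rpow_nonneg hsA.le _)), abs_of_pos hG]
      ring
    rw [habs]
    have hcmp : (s - A) ^ ((n : ℝ) * α - 1) ≤ l ^ ((n : ℝ) * α - 1) + r ^ ((n : ℝ) * α - 1) := by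
      rcases le_total ((n : ℝ) * α - 1) 0 with hc | hc
      · have h3 := Real.rpow_le_rpow_of_nonpos hl hsl.le hc
        have h2 : 0 ≤ r ^ ((n : ℝ) * α - 1) := Real.rpow_nonneg hr.le _
        linarith
      · have h3 := Real.rpow_le_rpow hsA.le hsr.le hc
        have h2 : 0 ≤ l ^ ((n : ℝ) * α - 1) := Real.rpow_nonneg hl.le _
        linarith
    have hS : 0 ≤ d1 ^ n / l + d2 ^ n / r := by positivity
    calc (n : ℝ) * α * (|lam| ^ n * (s - A) ^ ((n : ℝ) * α - 1)) /
          Real.Gamma ((n : ℝ) * α + 1)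
        ≤ (n : ℝ) * α * (|lam| ^ n * (l ^ ((n : ℝ) * α - 1) + r ^ ((n : ℝ) * α - 1))) /
          Real.Gamma ((n : ℝ) * α + 1) := by
          apply (div_le_div_iff_of_pos_right hG).2
          apply mul_le_mul_of_nonneg_left _ (by positivity)
          exact mul_le_mul_of_nonneg_left hcmp (by positivity)
      _ = (n : ℝ) * α * (d1 ^ n / l + d2 ^ n / r) / Real.Gamma ((n : ℝ) * α + 1) := by
          rw [mul_add, key l hl n, key r hr n]
      _ ≤ ((n : ℝ) + 1) * α * (d1 ^ n / l + d2 ^ n / r) / Real.Gamma ((n : ℝ) * α + 1) := by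
          apply (div_le_div_iff_of_pos_right hG).2
          apply mul_le_mul_of_nonneg_right _ hS
          apply mul_le_mul_of_nonneg_right _ hα.le
          linarith [Nat.cast_nonneg (α := ℝ) n]
      _ = u n := by rw [hu]; ring
  have hg0 : Summable (fun n : ℕ => g n x) := by
    apply Summable.of_abs
    apply (aux_summable_ml hα (d := |lam| * (x - A) ^ α) (by positivity)).congr
    intro n
    rw [hg, aux_ml_term hxA.le, abs_div, abs_mul, abs_pow, abs_of_nonneg
      (Real.rpow_nonneg hxA.le _), abs_of_pos (hGpos n)]
  have hmain := hasDerivAt_tsum_of_isPreconnected husum isOpen_Ioo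
    (convex_Ioo _ _).isPreconnected hgderiv hbound hxT hg0 hxT
  have hsum' : Summable (fun n => g' n x) :=
    Summable.of_norm_bounded husum fun n => hbound n x hxT
  have hval : ∑' n, g' n x = ∑' m : ℕ, lam ^ (m + 1) * (x - A) ^ (((m : ℝ) + 1) * α - 1) /
      Real.Gamma (((m : ℝ) + 1) * α) := by
    rw [hsum'.tsum_eq_zero_add]
    have h0 : g' 0 x = 0 := by simp [hg']
    rw [h0, zero_add]
    apply tsum_congr
    intro n
    have hcast : ((n + 1 : ℕ) : ℝ) = (n : ℝ) + 1 := by push_cast; ring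
    have hβ : 0 < ((n : ℝ) + 1) * α := by positivity
    have hGβ : 0 < Real.Gamma (((n : ℝ) + 1) * α) := Real.Gamma_pos_of_pos hβ
    rw [hg']
    simp only [hcast]
    rw [Real.Gamma_add_one hβ.ne']
    field_simp
  rw [← hval]
  exact hmain

theorem stmt7 (a : ℝ) (ψ : ℝ → ℝ) (hψ : ContDiff ℝ 1 ψ)
    (hmono : StrictMono ψ) (hψ' : ∀ x, deriv ψ x ≠ 0)
    (α lam : ℝ) (hα : 0 < α) (hα1 : α < 1) :
    ∀ t, a < t →
      caputo α ψ a (fun τ => ML α (lam * (ψ τ - ψ a) ^ α)) t =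
        lam * ML α (lam * (ψ t - ψ a) ^ α) := by
  intro t ht
  have hAB : ψ a < ψ t := hmono ht
  have hX : 0 < ψ t - ψ a := sub_pos.2 hAB
  have hψdiff : Differentiable ℝ ψ := hψ.differentiable one_ne_zero
  have hψd : ∀ x, HasDerivAt ψ (deriv ψ x) x := fun x => (hψdiff x).hasDerivAt
  have hψ'pos : ∀ x, 0 < deriv ψ x := fun x =>
    lt_of_le_of_ne (aux_slope hmono.monotone (hψd x)) (Ne.symm (hψ' x))
  have hψcont : Continuous ψ := hψ.continuous
  have h1α : 0 < 1 - α := by linarith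
  have hG1α : 0 < Real.Gamma (1 - α) := Real.Gamma_pos_of_pos h1α
  have hqq : ∀ m : ℕ, 0 < ((m : ℝ) + 1) * α := fun m => by positivity
  have hGq : ∀ m : ℕ, 0 < Real.Gamma (((m : ℝ) + 1) * α) := fun m =>
    Real.Gamma_pos_of_pos (hqq m)
  have hGm : ∀ m : ℕ, 0 < Real.Gamma ((m : ℝ) * α + 1) := fun m =>
    Real.Gamma_pos_of_pos (by positivity)
  -- Step A : derivative of the composed ML function
  have hderiv : ∀ τ, a < τ → deriv (fun σ => ML α (lam * (ψ σ - ψ a) ^ α)) τ =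
      (∑' m : ℕ, lam ^ (m + 1) * (ψ τ - ψ a) ^ (((m : ℝ) + 1) * α - 1) /
        Real.Gamma (((m : ℝ) + 1) * α)) * deriv ψ τ := by
    intro τ hτ
    have hAx : ψ a < ψ τ := hmono hτ
    have hcomp := (aux_hasDerivAt (lam := lam) hα hAx).comp τ (hψd τ)
    have heq : (fun σ => ML α (lam * (ψ σ - ψ a) ^ α)) =ᶠ[nhds τ]
        ((fun s : ℝ => ∑' m : ℕ, lam ^ m * (s - ψ a) ^ ((m : ℝ) * α) /
          Real.Gamma (m * α + 1)) ∘ ψ) := by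
      filter_upwards [isOpen_Ioi.mem_nhds hτ] with σ hσ
      show ML α (lam * (ψ σ - ψ a) ^ α) = _
      simp only [Function.comp, ML]
      exact tsum_congr fun m => by
        rw [aux_ml_term (sub_nonneg.2 (hmono (Set.mem_Ioi.1 hσ)).le) α m]
    rw [heq.deriv_eq, hcomp.deriv]
  -- abbreviations
  set F : ℕ → ℝ → ℝ := fun m τ => lam ^ (m + 1) / Real.Gamma (((m : ℝ) + 1) * α) *
    (deriv ψ τ * ((ψ t - ψ τ) ^ (-α) * (ψ τ - ψ a) ^ (((m : ℝ) + 1) * α - 1))) with hF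
  -- kernel integrability on Icc a t
  have hker : ∀ qq : ℝ, 0 < qq → IntegrableOn
      (fun τ => deriv ψ τ * ((ψ t - ψ τ) ^ (-α) * (ψ τ - ψ a) ^ (qq - 1))) (Icc a t) := by
    intro qq hq
    have h1 : IntervalIntegrable (fun s => (ψ t - s) ^ ((1 - α) - 1) * (s - ψ a) ^ (qq - 1))
        volume (ψ a) (ψ t) := aux_integrable h1α hq hAB
    rw [show (1 : ℝ) - α - 1 = -α from by ring] at h1
    have h2 : IntegrableOn (fun s => (ψ t - s) ^ (-α) * (s - ψ a) ^ (qq - 1))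
        (Icc (ψ a) (ψ t)) := by
      rw [← Set.uIcc_of_le hAB.le]
      exact (intervalIntegrable_iff' enorm_ne_top).1 h1
    have h3 : IntegrableOn (fun s => (ψ t - s) ^ (-α) * (s - ψ a) ^ (qq - 1))
        (ψ '' Icc a t) := h2.mono_set (by
      rintro s ⟨x, hx, rfl⟩
      exact ⟨hmono.monotone hx.1, hmono.monotone hx.2⟩)
    have h4 := (integrableOn_image_iff_integrableOn_abs_deriv_smul measurableSet_Icc
      (fun x _ => (hψd x).hasDerivWithinAt) (hmono.injective.injOn)
      (fun s => (ψ t - s) ^ (-α) * (s - ψ a) ^ (qq - 1))).1 h3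
    apply h4.congr_fun _ measurableSet_Icc
    intro x _
    simp only [smul_eq_mul, abs_of_pos (hψ'pos x)]
  -- substitution evaluation
  have hsub : ∀ qq : ℝ, 0 < qq →
      ∫ τ in a..t, deriv ψ τ • ((ψ t - ψ τ) ^ (-α) * (ψ τ - ψ a) ^ (qq - 1)) =
        Real.Gamma (1 - α) * Real.Gamma qq / Real.Gamma (1 - α + qq) *
          (ψ t - ψ a) ^ (1 - α + qq - 1) := by
    intro qq hq
    have hval := aux_beta' h1α hq hAB
    rw [show (1 : ℝ) - α - 1 = -α from by ring] at hval
    rw [← hval]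
    apply intervalIntegral.integral_comp_smul_deriv''' (f := ψ) (f' := deriv ψ)
      (g := fun s => (ψ t - s) ^ (-α) * (s - ψ a) ^ (qq - 1))
      hψcont.continuousOn (fun x _ => (hψd x).hasDerivWithinAt)
    · -- continuity on image of Ioo
      apply ContinuousOn.mono (s := Set.Ioo (ψ a) (ψ t))
      · apply ContinuousOn.mul
        · apply ContinuousOn.rpow_const (by fun_prop)
          intro x hx
          exact Or.inl (by have := hx.2; intro h; rw [sub_eq_zero] at h; exact absurd h.symm (ne_of_lt this))
        · apply ContinuousOn.rpow_const (by fun_prop)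
          intro x hx
          exact Or.inl (by have := hx.1; intro h; rw [sub_eq_zero] at h; exact absurd h (ne_of_gt this))
      · rw [min_eq_left ht.le, max_eq_right ht.le]
        rintro s ⟨x, hx, rfl⟩
        exact ⟨hmono hx.1, hmono hx.2⟩
    · -- integrability on image of uIcc
      have h1 : IntervalIntegrable (fun s => (ψ t - s) ^ ((1 - α) - 1) * (s - ψ a) ^ (qq - 1))
          volume (ψ a) (ψ t) := aux_integrable h1α hq hAB
      rw [show (1 : ℝ) - α - 1 = -α from by ring] at h1
      have h2 : IntegrableOn (fun s => (ψ t - s) ^ (-α) * (s - ψ a) ^ (qq - 1))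
          (Icc (ψ a) (ψ t)) := by
        rw [← Set.uIcc_of_le hAB.le]
        exact (intervalIntegrable_iff' enorm_ne_top).1 h1
      apply h2.mono_set
      rw [Set.uIcc_of_le ht.le]
      rintro s ⟨x, hx, rfl⟩
      exact ⟨hmono.monotone hx.1, hmono.monotone hx.2⟩
    · -- integrability of pulled-back function
      rw [Set.uIcc_of_le ht.le]
      apply (hker qq hq).congr_fun _ measurableSet_Icc
      intro x _
      simp only [Function.comp, smul_eq_mul]
  -- interval integral to Ioo
  have hIoo : ∀ h : ℝ → ℝ, (∫ τ in a..t, h τ) = ∫ τ in Set.Ioo a t, h τ := fun h => by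
    rw [intervalIntegral.integral_of_le ht.le, MeasureTheory.integral_Ioc_eq_integral_Ioo]
  -- J m
  have hJ : ∀ m : ℕ, ∫ τ in Set.Ioo a t,
      deriv ψ τ * ((ψ t - ψ τ) ^ (-α) * (ψ τ - ψ a) ^ (((m : ℝ) + 1) * α - 1)) =
      Real.Gamma (1 - α) * Real.Gamma (((m : ℝ) + 1) * α) / Real.Gamma ((m : ℝ) * α + 1) *
        (ψ t - ψ a) ^ ((m : ℝ) * α) := by
    intro m
    have h1 := hsub (((m : ℝ) + 1) * α) (hqq m)
    simp only [smul_eq_mul] at h1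
    rw [hIoo] at h1
    rw [h1, show (1 : ℝ) - α + ((m : ℝ) + 1) * α = (m : ℝ) * α + 1 from by ring,
      show (m : ℝ) * α + 1 - 1 = (m : ℝ) * α from by ring]
  -- integrability of each F m on Ioo
  have hint : ∀ m : ℕ, IntegrableOn (F m) (Set.Ioo a t) := fun m =>
    ((hker _ (hqq m)).mono_set Set.Ioo_subset_Icc_self).const_mul _
  -- norm integrals
  have hnorm : ∀ m : ℕ, (∫ τ in Set.Ioo a t, ‖F m τ‖) =
      |lam| ^ (m + 1) / Real.Gamma (((m : ℝ) + 1) * α) *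
        (Real.Gamma (1 - α) * Real.Gamma (((m : ℝ) + 1) * α) / Real.Gamma ((m : ℝ) * α + 1) *
          (ψ t - ψ a) ^ ((m : ℝ) * α)) := by
    intro m
    rw [← hJ m, ← MeasureTheory.integral_const_mul]
    apply setIntegral_congr_fun measurableSet_Ioo
    intro τ hτ
    have h1 : 0 ≤ deriv ψ τ * ((ψ t - ψ τ) ^ (-α) * (ψ τ - ψ a) ^ (((m : ℝ) + 1) * α - 1)) := by
      apply mul_nonneg (hψ'pos τ).le
      apply mul_nonneg (Real.rpow_nonneg (by linarith [hτ.2, hmono hτ.2] : (0:ℝ) ≤ ψ t - ψ τ) _)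
        (Real.rpow_nonneg (by linarith [hmono hτ.1] : (0:ℝ) ≤ ψ τ - ψ a) _)
    rw [hF]
    show ‖_‖ = _
    rw [Real.norm_eq_abs, abs_mul, abs_of_nonneg h1, abs_div, abs_pow,
      abs_of_pos (hGq m)]
  -- summability of norm integrals
  have hsummable : Summable (fun m : ℕ => ∫ τ in Set.Ioo a t, ‖F m τ‖) := by
    apply Summable.congr _ (fun m => (hnorm m).symm)
    apply Summable.congr ((aux_summable_ml hα
      (d := |lam| * (ψ t - ψ a) ^ α) (by positivity)).mul_left (Real.Gamma (1 - α) * |lam|))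
    intro m
    rw [aux_ml_term (le_of_lt hX), pow_succ]
    field_simp [(hGq m).ne', (hGm m).ne']
  have hinterchange := MeasureTheory.integral_tsum_of_summable_integral_norm
    (μ := volume.restrict (Set.Ioo a t)) (F := F) hint hsummable
  -- main computation
  unfold caputo psiInt
  rw [show (1 : ℝ) - α - 1 = -α from by ring]
  have hstep1 : (∫ τ in a..t, deriv ψ τ * (ψ t - ψ τ) ^ (-α) *
      (deriv (fun τ => ML α (lam * (ψ τ - ψ a) ^ α)) τ / deriv ψ τ)) =
      ∫ τ in Set.Ioo a t, ∑' m : ℕ, F m τ := by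
    rw [hIoo]
    apply setIntegral_congr_fun measurableSet_Ioo
    intro τ hτ
    simp only []
    rw [hderiv τ hτ.1, mul_div_cancel_right₀ _ (hψ' τ), ← tsum_mul_left]
    exact tsum_congr fun m => by simp only [hF]; ring
  rw [hstep1, ← hinterchange]
  have hFm : ∀ m : ℕ, (∫ τ in Set.Ioo a t, F m τ) =
      lam ^ (m + 1) / Real.Gamma (((m : ℝ) + 1) * α) *
        (Real.Gamma (1 - α) * Real.Gamma (((m : ℝ) + 1) * α) / Real.Gamma ((m : ℝ) * α + 1) *
          (ψ t - ψ a) ^ ((m : ℝ) * α)) := by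
    intro m
    simp only [hF]
    rw [MeasureTheory.integral_const_mul, hJ m]
  calc 1 / Real.Gamma (1 - α) * ∑' m : ℕ, ∫ τ in Set.Ioo a t, F m τ
      = ∑' m : ℕ, lam * ((lam * (ψ t - ψ a) ^ α) ^ m / Real.Gamma ((m : ℝ) * α + 1)) := by
        rw [← tsum_mul_left]
        apply tsum_congr
        intro m
        rw [hFm m, aux_ml_term hX.le, pow_succ]
        field_simp [(hGq m).ne', (hGm m).ne', hG1α.ne']
    _ = lam * ML α (lam * (ψ t - ψ a) ^ α) := by
        rw [tsum_mul_left]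
        rfl
end

section
/- Let 0 < α < 1 and let ψ be a C¹ increasing function with ψ' never zero. The function u(x,t) = e^{−x} · E_α((ψ(t)−ψ(a))^α) satisfies the nonlinear time-fractional gas-dynamic equation ^C D^{α,ψ}_{a+} u + u · ∂u/∂x − u + u² = 0 with initial condition u(x,a) = e^{−x}. -/
open Real

open MeasureTheory Set Filter

namespace MLAux

lemma gpos {α : ℝ} (hα : 0 < α) (m : ℕ) : 0 < Real.Gamma ((m : ℝ) * α + 1) :=
  Real.Gamma_pos_of_pos (by positivity)

lemma gamma_convex {α : ℝ} (hα : 0 < α) (hα1 : α < 1) {x : ℝ} (hx : 0 < x) :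
    Real.Gamma (x + 1) ≤ Real.Gamma (x + α) * (x + α) ^ (1 - α) := by
  have hxα : (0:ℝ) < x + α := by linarith
  have hxα1 : (0:ℝ) < x + α + 1 := by linarith
  have h := Real.convexOn_log_Gamma.2 (Set.mem_Ioi.2 hxα) (Set.mem_Ioi.2 hxα1)
    hα.le (by linarith : (0:ℝ) ≤ 1 - α) (by ring)
  simp only [Function.comp_apply, smul_eq_mul] at h
  rw [show α * (x + α) + (1 - α) * (x + α + 1) = x + 1 by ring] at h
  have hGpos : 0 < Real.Gamma (x + α) := Real.Gamma_pos_of_pos hxα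
  have hG1pos : 0 < Real.Gamma (x + 1) := Real.Gamma_pos_of_pos (by linarith)
  rw [Real.Gamma_add_one (ne_of_gt hxα),
    Real.log_mul (ne_of_gt hxα) (ne_of_gt hGpos)] at h
  calc Real.Gamma (x + 1) = Real.exp (Real.log (Real.Gamma (x + 1))) := (Real.exp_log hG1pos).symm
    _ ≤ Real.exp (α * Real.log (Real.Gamma (x + α)) +
        (1 - α) * (Real.log (x + α) + Real.log (Real.Gamma (x + α)))) := Real.exp_le_exp.2 h
    _ = Real.exp (Real.log (Real.Gamma (x + α)) + Real.log (x + α) * (1 - α)) := by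
        congr 1; ring
    _ = Real.Gamma (x + α) * (x + α) ^ (1 - α) := by
        rw [Real.exp_add, Real.exp_log hGpos, Real.rpow_def_of_pos hxα]

lemma summable_master {α : ℝ} (hα : 0 < α) (hα1 : α < 1) {r : ℝ} (hr : 0 ≤ r) :
    Summable (fun m : ℕ => ((m : ℝ) + 1) * r ^ m / Real.Gamma ((m : ℝ) * α + 1)) := by
  apply summable_of_ratio_norm_eventually_le (r := 1/2) (by norm_num)
  have h8 : (0:ℝ) < 1 / (8 * r + 8) := by positivity
  have htend : Tendsto (fun m : ℕ => ((m : ℝ) * α + 1) ^ (-α)) atTop (nhds 0) := by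
    apply (tendsto_rpow_neg_atTop hα).comp
    apply Filter.tendsto_atTop_add_const_right
    exact Tendsto.atTop_mul_const hα tendsto_natCast_atTop_atTop
  filter_upwards [htend.eventually_lt_const h8] with m hm
  set x : ℝ := (m : ℝ) * α + 1 with hxdef
  have hm0 : (0:ℝ) ≤ (m:ℝ) := Nat.cast_nonneg m
  have hx1 : (1:ℝ) ≤ x := by
    have : 0 ≤ (m:ℝ) * α := by positivity
    simp only [hxdef]; linarith
  have hxpos : (0:ℝ) < x := by linarith
  have hxα : (0:ℝ) < x + α := by linarith
  have hGx : 0 < Real.Gamma x := Real.Gamma_pos_of_pos hxpos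
  have hGxα : 0 < Real.Gamma (x + α) := Real.Gamma_pos_of_pos hxα
  have hxa2 : (x + α) ^ (1 - α) ≤ 2 * (x * x ^ (-α)) := by
    have h1 : (x + α) ^ (1 - α) ≤ (2 * x) ^ (1 - α) :=
      Real.rpow_le_rpow (by linarith) (by linarith) (by linarith)
    have h2 : (2 * x) ^ (1 - α) = 2 ^ (1 - α) * x ^ (1 - α) :=
      Real.mul_rpow (by norm_num) hxpos.le
    have h3 : (2:ℝ) ^ (1 - α) ≤ 2 ^ (1:ℝ) :=
      Real.rpow_le_rpow_of_exponent_le (by norm_num) (by linarith)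
    have h4 : x ^ (1 - α) = x * x ^ (-α) := by
      rw [show (1 - α : ℝ) = 1 + (-α) by ring, Real.rpow_add hxpos, Real.rpow_one]
    have h5 : (0:ℝ) ≤ x ^ (1 - α) := Real.rpow_nonneg hxpos.le _
    calc (x + α) ^ (1 - α) ≤ 2 ^ (1 - α) * x ^ (1 - α) := by rw [← h2]; exact h1
      _ ≤ 2 * x ^ (1 - α) := by
          have h6 : (2:ℝ) ^ (1:ℝ) = 2 := Real.rpow_one 2
          nlinarith
      _ = 2 * (x * x ^ (-α)) := by rw [h4]
  have hrx : r * x ^ (-α) ≤ 1 / 8 := by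
    have h1 : r * x ^ (-α) ≤ r * (1 / (8 * r + 8)) :=
      mul_le_mul_of_nonneg_left hm.le hr
    refine h1.trans ?_
    rw [mul_one_div, div_le_div_iff₀ (by positivity) (by norm_num)]
    linarith
  have hrm : (0:ℝ) ≤ r ^ m := pow_nonneg hr m
  have key : ((m:ℝ) + 1 + 1) * r ^ (m+1) * (x + α) ^ (1 - α)
      ≤ 1/2 * (((m:ℝ) + 1) * r ^ m) * x := by
    calc ((m:ℝ) + 1 + 1) * r ^ (m+1) * (x + α) ^ (1 - α)
        ≤ ((m:ℝ) + 1 + 1) * r ^ (m+1) * (2 * (x * x ^ (-α))) := by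
          apply mul_le_mul_of_nonneg_left hxa2 (by positivity)
      _ = (((m:ℝ) + 1 + 1) * r ^ m * (2 * x)) * (r * x ^ (-α)) := by rw [pow_succ]; ring
      _ ≤ (((m:ℝ) + 1 + 1) * r ^ m * (2 * x)) * (1/8) := by
          apply mul_le_mul_of_nonneg_left hrx (by positivity)
      _ ≤ ((2 * ((m:ℝ) + 1)) * r ^ m * (2 * x)) * (1/8) := by
          have h7 : ((m:ℝ) + 1 + 1) ≤ 2 * ((m:ℝ) + 1) := by linarith
          have h8' : (0:ℝ) ≤ r ^ m * (2 * x) := by positivity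
          nlinarith [mul_le_mul_of_nonneg_right h7 h8']
      _ = 1/2 * (((m:ℝ) + 1) * r ^ m) * x := by ring
  rw [Real.norm_eq_abs, Real.norm_eq_abs, abs_of_nonneg (by positivity),
    abs_of_nonneg (by positivity)]
  push_cast
  have hidx : ((m:ℝ) + 1) * α + 1 = x + α := by simp only [hxdef]; ring
  rw [hidx]
  rw [show (1:ℝ)/2 * (((m:ℝ) + 1) * r ^ m / Real.Gamma x)
      = (1/2 * (((m:ℝ) + 1) * r ^ m)) / Real.Gamma x by ring,
    div_le_div_iff₀ hGxα hGx]
  have hG1 : x * Real.Gamma x ≤ Real.Gamma (x + α) * (x + α) ^ (1 - α) := by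
    rw [← Real.Gamma_add_one (ne_of_gt hxpos)]
    exact gamma_convex hα hα1 hxpos
  have hpow : (0:ℝ) < (x + α) ^ (1 - α) := Real.rpow_pos_of_pos hxα _
  rw [← mul_le_mul_iff_of_pos_right hpow]
  calc ((m:ℝ) + 1 + 1) * r ^ (m+1) * Real.Gamma x * (x + α) ^ (1 - α)
      = (((m:ℝ) + 1 + 1) * r ^ (m+1) * (x + α) ^ (1 - α)) * Real.Gamma x := by ring
    _ ≤ (1/2 * (((m:ℝ) + 1) * r ^ m) * x) * Real.Gamma x :=
        mul_le_mul_of_nonneg_right key hGx.le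
    _ = (1/2 * (((m:ℝ) + 1) * r ^ m)) * (x * Real.Gamma x) := by ring
    _ ≤ (1/2 * (((m:ℝ) + 1) * r ^ m)) * (Real.Gamma (x + α) * (x + α) ^ (1 - α)) :=
        mul_le_mul_of_nonneg_left hG1 (by positivity)
    _ = 1/2 * (((m:ℝ) + 1) * r ^ m) * Real.Gamma (x + α) * (x + α) ^ (1 - α) := by ring

lemma summable_E {α : ℝ} (hα : 0 < α) (hα1 : α < 1) {z : ℝ} (hz : 0 ≤ z) :
    Summable (fun m : ℕ => z ^ m / Real.Gamma ((m : ℝ) * α + 1)) := by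
  refine Summable.of_nonneg_of_le (fun m => by positivity) (fun m => ?_)
    (summable_master hα hα1 hz)
  refine (div_le_div_iff_of_pos_right (gpos hα m)).2 ?_
  have h1 : (1:ℝ) ≤ (m:ℝ) + 1 := by have := Nat.cast_nonneg (α := ℝ) m; linarith
  exact le_mul_of_one_le_left (by positivity) h1

lemma summable_D {α : ℝ} (hα : 0 < α) (hα1 : α < 1) {R : ℝ} (hR : 0 ≤ R) :
    Summable (fun m : ℕ => (m:ℝ) * R ^ (m - 1) / Real.Gamma ((m : ℝ) * α + 1)) := by
  refine Summable.of_nonneg_of_le (fun m => by positivity) (fun m => ?_)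
    (summable_master hα hα1 (by linarith : (0:ℝ) ≤ R + 1))
  refine (div_le_div_iff_of_pos_right (gpos hα m)).2 ?_
  have h2 : (R+1) ^ (m-1) ≤ (R+1) ^ m := pow_le_pow_right₀ (by linarith) (Nat.sub_le m 1)
  have h1 : R ^ (m-1) ≤ (R+1) ^ (m-1) := pow_le_pow_left₀ hR (by linarith) _
  calc (m:ℝ) * R ^ (m-1) ≤ (m:ℝ) * (R+1) ^ m :=
        mul_le_mul_of_nonneg_left (h1.trans h2) (Nat.cast_nonneg m)
    _ ≤ ((m:ℝ) + 1) * (R+1) ^ m := by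
        apply mul_le_mul_of_nonneg_right (by linarith) (by positivity)

lemma hasDerivAt_ML {α : ℝ} (hα : 0 < α) (hα1 : α < 1) {z : ℝ} (hz : 0 < z) :
    HasDerivAt (fun y : ℝ => ∑' m : ℕ, y ^ m / Real.Gamma ((m : ℝ) * α + 1))
      (∑' m : ℕ, (m:ℝ) * z ^ (m - 1) / Real.Gamma ((m : ℝ) * α + 1)) z := by
  refine hasDerivAt_tsum_of_isPreconnected
    (u := fun m : ℕ => ((m:ℝ) + 1) * (z+1) ^ m / Real.Gamma ((m : ℝ) * α + 1))
    (g := fun (n : ℕ) (y : ℝ) => y ^ n / Real.Gamma ((n : ℝ) * α + 1))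
    (g' := fun (n : ℕ) (y : ℝ) => (n:ℝ) * y ^ (n - 1) / Real.Gamma ((n : ℝ) * α + 1))
    (summable_master hα hα1 (by linarith)) (isOpen_Ioo (a := (0:ℝ)) (b := z+1))
    (convex_Ioo (0:ℝ) (z+1)).isPreconnected
    (fun n y _ => (hasDerivAt_pow n y).div_const _)
    (fun n y hy => ?_) (mem_Ioo.2 ⟨hz, by linarith⟩) (summable_E hα hα1 hz.le)
    (mem_Ioo.2 ⟨hz, by linarith⟩)
  obtain ⟨hy0, hy1⟩ := hy
  rw [Real.norm_eq_abs, abs_of_nonneg (by positivity)]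
  refine (div_le_div_iff_of_pos_right (gpos hα n)).2 ?_
  have h1 : y ^ (n-1) ≤ (z+1) ^ (n-1) := pow_le_pow_left₀ hy0.le hy1.le _
  have h2 : (z+1) ^ (n-1) ≤ (z+1) ^ n := pow_le_pow_right₀ (by linarith) (Nat.sub_le n 1)
  calc (n:ℝ) * y ^ (n-1) ≤ (n:ℝ) * (z+1) ^ n :=
        mul_le_mul_of_nonneg_left (h1.trans h2) (Nat.cast_nonneg n)
    _ ≤ ((n:ℝ) + 1) * (z+1) ^ n := by
        apply mul_le_mul_of_nonneg_right (by linarith) (by positivity)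

lemma betaIntegrable01 {p q : ℝ} (hp : 0 < p) (hq : 0 < q) :
    IntervalIntegrable (fun x : ℝ => x ^ (p-1) * (1-x) ^ (q-1)) volume 0 1 := by
  apply IntervalIntegrable.trans (b := 1/2)
  · apply IntervalIntegrable.mul_continuousOn
      (intervalIntegral.intervalIntegrable_rpow' (by linarith))
    apply ContinuousOn.rpow_const (by fun_prop)
    intro x hx
    rw [uIcc_of_le (by norm_num : (0:ℝ) ≤ 1/2)] at hx
    exact Or.inl (ne_of_gt (by linarith [hx.2]))
  · have hi : IntervalIntegrable (fun x : ℝ => (1-x) ^ (q-1)) volume (1/2) 1 := by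
      have h0 := (intervalIntegral.intervalIntegrable_rpow'
        (a := 1/2) (b := 0) (by linarith : (-1:ℝ) < q - 1)).comp_sub_left 1
      norm_num at h0
      exact h0
    apply IntervalIntegrable.continuousOn_mul hi
    apply ContinuousOn.rpow_const (by fun_prop)
    intro x hx
    rw [uIcc_of_le (by norm_num : (1/2:ℝ) ≤ 1)] at hx
    exact Or.inl (ne_of_gt (by linarith [hx.1]))

lemma betaValue01 {p q : ℝ} (hp : 0 < p) (hq : 0 < q) :
    ∫ x in (0:ℝ)..1, x ^ (p-1) * (1-x) ^ (q-1)
      = Real.Gamma p * Real.Gamma q / Real.Gamma (p+q) := by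
  have hc := Complex.Gamma_mul_Gamma_eq_betaIntegral (s := (p:ℂ)) (t := (q:ℂ))
    (by simpa using hp) (by simpa using hq)
  have h2 : Complex.betaIntegral (p:ℂ) (q:ℂ)
      = ((∫ x in (0:ℝ)..1, x ^ (p-1) * (1-x) ^ (q-1) : ℝ) : ℂ) := by
    rw [Complex.betaIntegral, ← intervalIntegral.integral_ofReal]
    apply intervalIntegral.integral_congr
    intro x hx
    rw [uIcc_of_le (by norm_num : (0:ℝ) ≤ 1)] at hx
    have h1x : (0:ℝ) ≤ 1 - x := by linarith [hx.2]
    push_cast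
    rw [Complex.ofReal_cpow hx.1, Complex.ofReal_cpow h1x]
    push_cast
    ring_nf
  rw [h2] at hc
  rw [← Complex.ofReal_add, Complex.Gamma_ofReal, Complex.Gamma_ofReal, Complex.Gamma_ofReal,
    ← Complex.ofReal_mul, ← Complex.ofReal_mul] at hc
  have h3 : Real.Gamma p * Real.Gamma q
      = Real.Gamma (p+q) * ∫ x in (0:ℝ)..1, x ^ (p-1) * (1-x) ^ (q-1) := by exact_mod_cast hc
  have hne : Real.Gamma (p+q) ≠ 0 := ne_of_gt (Real.Gamma_pos_of_pos (by linarith))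
  rw [eq_div_iff hne]
  linear_combination -h3

lemma betaValue {α : ℝ} (hα : 0 < α) (hα1 : α < 1) {p cc bb : ℝ} (hp : 0 < p) (hcb : cc < bb) :
    ∫ s in cc..bb, (bb - s) ^ (-α) * (s - cc) ^ (p-1)
      = (bb - cc) ^ (p - α) * (Real.Gamma p * Real.Gamma (1-α) / Real.Gamma (p+1-α)) := by
  have hk : (0:ℝ) < bb - cc := by linarith
  have hne : bb - cc ≠ 0 := ne_of_gt hk
  have h := intervalIntegral.integral_comp_mul_add (a := (0:ℝ)) (b := 1)
    (f := fun s => (bb - s) ^ (-α) * (s - cc) ^ (p-1)) hne cc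
  rw [show (bb-cc) * 0 + cc = cc by ring, show (bb-cc) * 1 + cc = bb by ring] at h
  have h4 : (∫ x in (0:ℝ)..1, ((bb - ((bb-cc) * x + cc)) ^ (-α) * (((bb-cc) * x + cc) - cc) ^ (p-1)))
      = (bb-cc) ^ (-α) * (bb-cc) ^ (p-1)
        * (Real.Gamma p * Real.Gamma (1-α) / Real.Gamma (p+1-α)) := by
    have hEq : Set.EqOn (fun x => (bb - ((bb-cc) * x + cc)) ^ (-α) * (((bb-cc) * x + cc) - cc) ^ (p-1))
        (fun x => ((bb-cc) ^ (-α) * (bb-cc) ^ (p-1)) * (x ^ (p-1) * (1-x) ^ ((1-α)-1)))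
        (Set.uIcc (0:ℝ) 1) := by
      intro x hx
      rw [uIcc_of_le (by norm_num : (0:ℝ) ≤ 1)] at hx
      have h1x : (0:ℝ) ≤ 1 - x := by linarith [hx.2]
      simp only
      rw [show bb - ((bb-cc) * x + cc) = (bb-cc) * (1-x) by ring,
        show ((bb-cc) * x + cc) - cc = (bb-cc) * x by ring,
        Real.mul_rpow hk.le h1x, Real.mul_rpow hk.le hx.1,
        show (1-α) - 1 = -α by ring]
      ring
    rw [intervalIntegral.integral_congr hEq, intervalIntegral.integral_const_mul,
      betaValue01 hp (by linarith : (0:ℝ) < 1 - α)]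
    rw [show p + (1-α) = p + 1 - α by ring]
  rw [h4, eq_comm, inv_smul_eq_iff₀ hne, smul_eq_mul] at h
  rw [h, show (bb-cc) * ((bb-cc) ^ (-α) * (bb-cc) ^ (p-1)
        * (Real.Gamma p * Real.Gamma (1-α) / Real.Gamma (p+1-α)))
      = ((bb-cc) * ((bb-cc) ^ (-α) * (bb-cc) ^ (p-1)))
        * (Real.Gamma p * Real.Gamma (1-α) / Real.Gamma (p+1-α)) by ring]
  congr 1
  rw [show p - α = 1 + (-α + (p-1)) by ring, Real.rpow_add hk, Real.rpow_add hk, Real.rpow_one]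

lemma betaIntegrable {α : ℝ} (hα : 0 < α) (hα1 : α < 1) {p cc bb : ℝ} (hp : 0 < p)
    (hcb : cc < bb) :
    IntervalIntegrable (fun s : ℝ => (bb - s) ^ (-α) * (s - cc) ^ (p-1)) volume cc bb := by
  have hk : (0:ℝ) < bb - cc := by linarith
  apply IntervalIntegrable.trans (b := (bb-cc)/2 + cc)
  · have hi : IntervalIntegrable (fun s : ℝ => (s - cc) ^ (p-1)) volume cc ((bb-cc)/2 + cc) := by
      have h0 := (intervalIntegral.intervalIntegrable_rpow'
        (a := 0) (b := (bb-cc)/2) (by linarith : (-1:ℝ) < p - 1)).comp_sub_right cc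
      rw [show (0:ℝ) + cc = cc by ring] at h0
      exact h0
    apply IntervalIntegrable.continuousOn_mul hi
    apply ContinuousOn.rpow_const (by fun_prop)
    intro s hs
    rw [uIcc_of_le (by linarith : cc ≤ (bb-cc)/2 + cc)] at hs
    exact Or.inl (ne_of_gt (by cases hs with | intro h1 h2 => linarith))
  · have hi : IntervalIntegrable (fun s : ℝ => (bb - s) ^ (-α)) volume ((bb-cc)/2 + cc) bb := by
      have h0 := (intervalIntegral.intervalIntegrable_rpow'
        (a := (bb-cc)/2) (b := 0) (by linarith : (-1:ℝ) < -α)).comp_sub_left bb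
      rw [show bb - (bb-cc)/2 = (bb-cc)/2 + cc by ring, show bb - (0:ℝ) = bb by ring] at h0
      exact h0
    apply IntervalIntegrable.mul_continuousOn hi
    apply ContinuousOn.rpow_const (by fun_prop)
    intro s hs
    rw [uIcc_of_le (by linarith : (bb-cc)/2 + cc ≤ bb)] at hs
    exact Or.inl (ne_of_gt (by cases hs with | intro h1 h2 => linarith))

noncomputable def gfun (α : ℝ) (ψ : ℝ → ℝ) (a t : ℝ) (m : ℕ) (τ : ℝ) : ℝ :=
  deriv ψ τ * ((ψ t - ψ τ) ^ (-α) * (ψ τ - ψ a) ^ (((m:ℝ)+1) * α - 1)) *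
    (((m:ℝ)+1) * α / Real.Gamma (((m:ℝ)+1) * α + 1))

set_option maxHeartbeats 1000000 in
lemma caputo_ML {α a t : ℝ} (hα : 0 < α) (hα1 : α < 1) {ψ : ℝ → ℝ}
    (hψ : ContDiff ℝ 1 ψ) (hmono : StrictMono ψ) (hψ' : ∀ x, deriv ψ x ≠ 0) (hat : a < t) :
    caputo α ψ a (fun s => ML α ((ψ s - ψ a) ^ α)) t = ML α ((ψ t - ψ a) ^ α) := by
  have hψdiff : Differentiable ℝ ψ := hψ.differentiable one_ne_zero
  have hψd : ∀ s, HasDerivAt ψ (deriv ψ s) s := fun s => (hψdiff s).hasDerivAt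
  have hcont : Continuous ψ := hψ.continuous
  have hdpos : ∀ s, 0 < deriv ψ s := by
    intro s
    refine lt_of_le_of_ne ?_ (Ne.symm (hψ' s))
    have h := hasDerivAt_iff_tendsto_slope.mp (hψd s)
    have h2 : Tendsto (slope ψ s) (nhdsWithin s (Set.Ioi s)) (nhds (deriv ψ s)) :=
      h.mono_left (nhdsWithin_mono s (fun y hy => (Set.mem_Ioi.mp hy).ne'))
    refine ge_of_tendsto h2 ?_
    filter_upwards [self_mem_nhdsWithin] with y hy
    have hsy : s < y := Set.mem_Ioi.mp hy
    rw [slope_def_field]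
    apply div_nonneg (by linarith [hmono hsy]) (by linarith)
  have hcb : ψ a < ψ t := hmono hat
  have hT : (0:ℝ) < ψ t - ψ a := by linarith
  have hG1α : 0 < Real.Gamma (1 - α) := Real.Gamma_pos_of_pos (by linarith)
  -- nonnegativity
  have hgnn : ∀ m : ℕ, ∀ τ ∈ Set.Ioo a t, 0 ≤ gfun α ψ a t m τ := by
    intro m τ hτ
    have h1 : (0:ℝ) ≤ ψ t - ψ τ := by linarith [hmono hτ.2]
    have h2 : (0:ℝ) ≤ ψ τ - ψ a := by linarith [hmono hτ.1]
    have h3 := (hdpos τ).le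
    have h5 : (0:ℝ) < Real.Gamma (((m:ℝ)+1) * α + 1) := Real.Gamma_pos_of_pos (by positivity)
    apply mul_nonneg (mul_nonneg h3 (mul_nonneg (Real.rpow_nonneg h1 _) (Real.rpow_nonneg h2 _)))
    positivity
  -- image of interval
  have himg : ψ '' Set.Ioo a t = Set.Ioo (ψ a) (ψ t) :=
    Set.Subset.antisymm hmono.image_Ioo_subset
      (intermediate_value_Ioo hat.le hcont.continuousOn)
  -- value of each integral
  have hval : ∀ m : ℕ, (∫ τ in Set.Ioo a t, gfun α ψ a t m τ)
      = Real.Gamma (1-α) * (((ψ t - ψ a) ^ α) ^ m / Real.Gamma ((m:ℝ) * α + 1)) := by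
    intro m
    set p : ℝ := ((m:ℝ)+1) * α with hpdef
    have hp : 0 < p := by positivity
    have hGp : 0 < Real.Gamma p := Real.Gamma_pos_of_pos hp
    have hcv := integral_image_eq_integral_abs_deriv_smul measurableSet_Ioo
      (fun τ (_ : τ ∈ Set.Ioo a t) => (hψd τ).hasDerivWithinAt) hmono.injective.injOn
      (fun s => (ψ t - s) ^ (-α) * (s - ψ a) ^ (p-1))
    rw [himg] at hcv
    simp only [smul_eq_mul] at hcv
    have hIcb : (∫ s in Set.Ioo (ψ a) (ψ t), (ψ t - s) ^ (-α) * (s - ψ a) ^ (p-1))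
        = (ψ t - ψ a) ^ (p-α) * (Real.Gamma p * Real.Gamma (1-α) / Real.Gamma (p+1-α)) := by
      rw [← MeasureTheory.integral_Ioc_eq_integral_Ioo, ← intervalIntegral.integral_of_le hcb.le]
      exact betaValue hα hα1 hp hcb
    calc (∫ τ in Set.Ioo a t, gfun α ψ a t m τ)
        = ∫ τ in Set.Ioo a t,
            (|deriv ψ τ| * ((ψ t - ψ τ) ^ (-α) * (ψ τ - ψ a) ^ (p-1)))
              * (p / Real.Gamma (p+1)) := by
          apply setIntegral_congr_fun measurableSet_Ioo
          intro τ _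
          simp only [gfun]
          rw [abs_of_pos (hdpos τ), hpdef]
      _ = (∫ τ in Set.Ioo a t,
            |deriv ψ τ| * ((ψ t - ψ τ) ^ (-α) * (ψ τ - ψ a) ^ (p-1)))
              * (p / Real.Gamma (p+1)) := by rw [integral_mul_const]
      _ = (∫ s in Set.Ioo (ψ a) (ψ t), (ψ t - s) ^ (-α) * (s - ψ a) ^ (p-1))
              * (p / Real.Gamma (p+1)) := by rw [← hcv]
      _ = ((ψ t - ψ a) ^ (p-α) * (Real.Gamma p * Real.Gamma (1-α) / Real.Gamma (p+1-α)))
              * (p / Real.Gamma (p+1)) := by rw [hIcb]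
      _ = Real.Gamma (1-α) * (((ψ t - ψ a) ^ α) ^ m / Real.Gamma ((m:ℝ) * α + 1)) := by
          have e1 : (ψ t - ψ a) ^ (p-α) = ((ψ t - ψ a) ^ α) ^ m := by
            rw [← Real.rpow_natCast ((ψ t - ψ a) ^ α) m, ← Real.rpow_mul hT.le]
            congr 1
            rw [hpdef]; ring
          have e2 : Real.Gamma (p+1) = p * Real.Gamma p := Real.Gamma_add_one (ne_of_gt hp)
          have e3 : p + 1 - α = (m:ℝ) * α + 1 := by rw [hpdef]; ring
          rw [e1, e2, e3]
          have h6 : 0 < Real.Gamma ((m:ℝ) * α + 1) := gpos hα m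
          field_simp
  -- integrability
  have hint : ∀ m : ℕ, IntegrableOn (gfun α ψ a t m) (Set.Ioo a t) := by
    intro m
    set p : ℝ := ((m:ℝ)+1) * α with hpdef
    have hp : 0 < p := by positivity
    have hIb : IntegrableOn (fun s => (ψ t - s) ^ (-α) * (s - ψ a) ^ (p-1))
        (Set.Ioo (ψ a) (ψ t)) := by
      have h1 := betaIntegrable hα hα1 hp hcb
      rw [intervalIntegrable_iff_integrableOn_Ioc_of_le hcb.le] at h1
      exact h1.mono_set Set.Ioo_subset_Ioc_self
    have hiff := integrableOn_image_iff_integrableOn_abs_deriv_smul measurableSet_Ioo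
      (fun τ (_ : τ ∈ Set.Ioo a t) => (hψd τ).hasDerivWithinAt) hmono.injective.injOn
      (fun s => (ψ t - s) ^ (-α) * (s - ψ a) ^ (p-1))
    rw [himg] at hiff
    have h2 := hiff.mp hIb
    have h3 := h2.mul_const (p / Real.Gamma (p+1))
    refine IntegrableOn.congr_fun h3 (fun τ _ => ?_) measurableSet_Ioo
    simp only [gfun, smul_eq_mul]
    rw [abs_of_pos (hdpos τ), hpdef]
  have hmeas : ∀ m : ℕ, AEStronglyMeasurable (gfun α ψ a t m)
      (volume.restrict (Set.Ioo a t)) := fun m => (hint m).aestronglyMeasurable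
  have hsum : Summable (fun m : ℕ =>
      Real.Gamma (1-α) * (((ψ t - ψ a) ^ α) ^ m / Real.Gamma ((m:ℝ) * α + 1))) :=
    (summable_E hα hα1 (Real.rpow_nonneg hT.le α)).mul_left _
  have hfin : (∑' m : ℕ, ∫⁻ τ in Set.Ioo a t, ‖gfun α ψ a t m τ‖₊ ∂volume) ≠ ⊤ := by
    have heq : ∀ m : ℕ, (∫⁻ τ in Set.Ioo a t, (‖gfun α ψ a t m τ‖₊ : ENNReal) ∂volume)
        = ENNReal.ofReal (∫ τ in Set.Ioo a t, gfun α ψ a t m τ) := by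
      intro m
      rw [MeasureTheory.ofReal_integral_eq_lintegral_ofReal (hint m)
        (by filter_upwards [ae_restrict_mem measurableSet_Ioo] with τ hτ using hgnn m τ hτ)]
      apply lintegral_congr_ae
      filter_upwards [ae_restrict_mem measurableSet_Ioo] with τ hτ
      rw [← Real.enorm_eq_ofReal (hgnn m τ hτ), enorm_eq_nnnorm]
    simp only [heq, hval]
    rw [← ENNReal.ofReal_tsum_of_nonneg (fun m => by positivity) hsum]
    exact ENNReal.ofReal_ne_top
  -- pointwise series representation of the integrand
  have hpt : ∀ τ ∈ Set.Ioo a t,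
      deriv ψ τ * (ψ t - ψ τ) ^ (1 - α - 1) *
        (deriv (fun s => ML α ((ψ s - ψ a) ^ α)) τ / deriv ψ τ)
      = ∑' m : ℕ, gfun α ψ a t m τ := by
    intro τ hτ
    obtain ⟨hτ1, hτ2⟩ := hτ
    have hw : (0:ℝ) < ψ τ - ψ a := by linarith [hmono hτ1]
    have hz : (0:ℝ) < (ψ τ - ψ a) ^ α := Real.rpow_pos_of_pos hw α
    have hgd : HasDerivAt (fun s => (ψ s - ψ a) ^ α)
        (α * (ψ τ - ψ a) ^ (α-1) * deriv ψ τ) τ := by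
      have hin : HasDerivAt (fun s => ψ s - ψ a) (deriv ψ τ) τ := (hψd τ).sub_const _
      have hout : HasDerivAt (fun y : ℝ => y ^ α) (α * (ψ τ - ψ a) ^ (α-1)) (ψ τ - ψ a) :=
        Real.hasDerivAt_rpow_const (Or.inl (ne_of_gt hw))
      exact hout.comp τ hin
    have hMLd : HasDerivAt (fun s => ML α ((ψ s - ψ a) ^ α))
        ((∑' m : ℕ, (m:ℝ) * ((ψ τ - ψ a) ^ α) ^ (m-1) / Real.Gamma ((m:ℝ) * α + 1))
          * (α * (ψ τ - ψ a) ^ (α-1) * deriv ψ τ)) τ :=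
      by unfold ML; exact (hasDerivAt_ML hα hα1 hz).comp τ hgd
    rw [hMLd.deriv]
    have hre : (∑' m : ℕ, (m:ℝ) * ((ψ τ - ψ a) ^ α) ^ (m-1) / Real.Gamma ((m:ℝ) * α + 1))
        = ∑' m : ℕ, ((m:ℝ)+1) * ((ψ τ - ψ a) ^ α) ^ m / Real.Gamma (((m:ℝ)+1) * α + 1) := by
      rw [Summable.tsum_eq_zero_add (summable_D hα hα1 hz.le)]
      simp only [Nat.cast_zero, zero_mul, zero_div, zero_add, Nat.cast_add, Nat.cast_one,
        Nat.add_sub_cancel]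
    rw [hre]
    set S : ℝ := ∑' m : ℕ, ((m:ℝ)+1) * ((ψ τ - ψ a) ^ α) ^ m / Real.Gamma (((m:ℝ)+1) * α + 1)
      with hS
    have hLHS : deriv ψ τ * (ψ t - ψ τ) ^ (1 - α - 1) *
          (S * (α * (ψ τ - ψ a) ^ (α-1) * deriv ψ τ) / deriv ψ τ)
        = (deriv ψ τ * ((ψ t - ψ τ) ^ (-α) * (α * (ψ τ - ψ a) ^ (α-1)))) * S := by
      rw [show (1:ℝ) - α - 1 = -α by ring,
        show S * (α * (ψ τ - ψ a) ^ (α-1) * deriv ψ τ)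
          = (S * (α * (ψ τ - ψ a) ^ (α-1))) * deriv ψ τ by ring,
        mul_div_cancel_right₀ _ (hψ' τ)]
      ring
    rw [hLHS, hS, ← tsum_mul_left]
    apply tsum_congr
    intro m
    have hzm : ((ψ τ - ψ a) ^ α) ^ m = (ψ τ - ψ a) ^ (α * (m:ℝ)) := by
      rw [← Real.rpow_natCast ((ψ τ - ψ a) ^ α) m, ← Real.rpow_mul hw.le]
    have hww : (ψ τ - ψ a) ^ (α-1) * (ψ τ - ψ a) ^ (α * (m:ℝ))
        = (ψ τ - ψ a) ^ (((m:ℝ)+1) * α - 1) := by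
      rw [← Real.rpow_add hw]
      congr 1
      ring
    simp only [gfun]
    rw [hzm, ← hww]
    ring
  -- main computation
  simp only [caputo, psiInt]
  rw [intervalIntegral.integral_of_le hat.le, MeasureTheory.integral_Ioc_eq_integral_Ioo,
    setIntegral_congr_fun measurableSet_Ioo (fun τ hτ => hpt τ hτ),
    MeasureTheory.integral_tsum hmeas hfin, tsum_congr hval, tsum_mul_left, ML, one_div,
    inv_mul_cancel_left₀ (ne_of_gt hG1α)]

end MLAux

open MLAux in
theorem stmt11 (a : ℝ) (ψ : ℝ → ℝ) (hψ : ContDiff ℝ 1 ψ)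
    (hmono : StrictMono ψ) (hψ' : ∀ x, deriv ψ x ≠ 0)
    (α : ℝ) (hα : 0 < α) (hα1 : α < 1)
    (u : ℝ → ℝ → ℝ)
    (hu : ∀ x t, u x t = Real.exp (-x) * ML α ((ψ t - ψ a) ^ α)) :
    (∀ x t, a < t →
        caputo α ψ a (fun s => u x s) t + u x t * deriv (fun y => u y t) x -
            u x t + (u x t) ^ 2 = 0) ∧
      ∀ x, u x a = Real.exp (-x) := by
  constructor
  · intro x t hat
    have hueq : (fun s => u x s) = fun s => Real.exp (-x) * ML α ((ψ s - ψ a) ^ α) :=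
      funext fun s => hu x s
    have hpull : caputo α ψ a (fun s => Real.exp (-x) * ML α ((ψ s - ψ a) ^ α)) t
        = Real.exp (-x) * caputo α ψ a (fun s => ML α ((ψ s - ψ a) ^ α)) t := by
      simp only [caputo, psiInt]
      rw [intervalIntegral.integral_congr
        (g := fun τ => Real.exp (-x) * (deriv ψ τ * (ψ t - ψ τ) ^ (1 - α - 1) *
          (deriv (fun s => ML α ((ψ s - ψ a) ^ α)) τ / deriv ψ τ)))
        (fun τ _ => by simp only; rw [deriv_const_mul_field]; ring),
        intervalIntegral.integral_const_mul]
      ring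
    have hcap : caputo α ψ a (fun s => u x s) t = Real.exp (-x) * ML α ((ψ t - ψ a) ^ α) := by
      rw [hueq, hpull, caputo_ML hα hα1 hψ hmono hψ' hat]
    have hx : deriv (fun y => u y t) x = -(Real.exp (-x) * ML α ((ψ t - ψ a) ^ α)) := by
      have h1 : (fun y => u y t) = fun y => Real.exp (-y) * ML α ((ψ t - ψ a) ^ α) :=
        funext fun y => hu y t
      rw [h1]
      have h2 : HasDerivAt (fun y : ℝ => Real.exp (-y)) (Real.exp (-x) * (-1)) x :=
        (Real.hasDerivAt_exp (-x)).comp x ((hasDerivAt_id x).neg)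
      have h3 := h2.mul_const (ML α ((ψ t - ψ a) ^ α))
      rw [h3.deriv]
      ring
    rw [hcap, hx, hu x t]
    ring
  · intro x
    rw [hu x a, sub_self, Real.zero_rpow (ne_of_gt hα), ML]
    have h1 : (∑' m : ℕ, (0:ℝ) ^ m / Real.Gamma ((m:ℝ) * α + 1)) = 1 := by
      rw [tsum_eq_single 0 (fun m hm => by rw [zero_pow hm, zero_div])]
      norm_num [Real.Gamma_one]
    rw [h1, mul_one]
end

section
/- For the gas-dynamic HAM recursion with ℏ = −1, the iterates satisfy u_m(x,t) = e^{−x} (ψ(t)−ψ(a))^{mα}/Γ(mα+1) for all m ≥ 0, where the recursion is u_m = −I^{α,ψ}_{a+}[Σ_{i=0}^{m−1} u_i ∂_x u_{m−1−i} − u_{m−1} + Σ_{i=0}^{m−1} u_i u_{m−1−i}] and u_0(x,t) = e^{−x}. -/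
open Real

open intervalIntegral MeasureTheory Set Filter


lemma realBeta (p q : ℝ) (hp : 0 < p) (hq : 0 < q) :
    ∫ x in (0:ℝ)..1, x ^ (p - 1) * (1 - x) ^ (q - 1) =
      Real.Gamma p * Real.Gamma q / Real.Gamma (p + q) := by
  have key := Complex.Gamma_mul_Gamma_eq_betaIntegral
    (s := (p : ℂ)) (t := (q : ℂ)) (by simpa using hp) (by simpa using hq)
  have hβ : Complex.betaIntegral p q =
      ((∫ x in (0:ℝ)..1, x ^ (p - 1) * (1 - x) ^ (q - 1) : ℝ) : ℂ) := by
    rw [Complex.betaIntegral, ← intervalIntegral.integral_ofReal]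
    refine intervalIntegral.integral_congr fun x hx => ?_
    rw [uIcc_of_le (by norm_num : (0:ℝ) ≤ 1)] at hx
    push_cast
    rw [Complex.ofReal_cpow hx.1, Complex.ofReal_cpow (by linarith [hx.2] : (0:ℝ) ≤ 1 - x)]
    push_cast
    norm_num
  have hG : Complex.Gamma ((p:ℂ) + q) ≠ 0 := by
    rw [← Complex.ofReal_add, Complex.Gamma_ofReal]
    exact_mod_cast (Real.Gamma_pos_of_pos (by linarith : (0:ℝ) < p + q)).ne'
  rw [hβ] at key
  have : ((Real.Gamma p * Real.Gamma q : ℝ) : ℂ) =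
      ((Real.Gamma (p+q) : ℝ) : ℂ) * ((∫ x in (0:ℝ)..1, x ^ (p-1) * (1-x) ^ (q-1) : ℝ) : ℂ) := by
    push_cast [← Complex.Gamma_ofReal]
    convert key using 2 <;> push_cast <;> ring
  have h2 : Real.Gamma p * Real.Gamma q =
      Real.Gamma (p+q) * ∫ x in (0:ℝ)..1, x ^ (p-1) * (1-x) ^ (q-1) := by exact_mod_cast this
  rw [h2]
  field_simp [(Real.Gamma_pos_of_pos (show 0 < p + q by linarith)).ne']

lemma betaScaled {c d α β : ℝ} (hcd : c < d) (hα : 0 < α) (hβ : 0 ≤ β) :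
    ∫ s in c..d, (d - s) ^ (α - 1) * (s - c) ^ β =
      Real.Gamma (β + 1) * Real.Gamma α / Real.Gamma (α + β + 1) * (d - c) ^ (α + β) := by
  have hk : d - c ≠ 0 := by linarith
  have hsub := intervalIntegral.integral_comp_mul_add
    (a := (0:ℝ)) (b := 1) (f := fun s => (d - s) ^ (α - 1) * (s - c) ^ β) hk c
  simp only [mul_zero, zero_add, mul_one] at hsub
  have heq : ∀ x ∈ uIcc (0:ℝ) 1,
      (d - ((d - c) * x + c)) ^ (α - 1) * (((d - c) * x + c) - c) ^ β =
        (d - c) ^ (α - 1 + β) * ((1 - x) ^ (α - 1) * x ^ β) := by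
    intro x hx
    rw [uIcc_of_le (by norm_num : (0:ℝ) ≤ 1)] at hx
    have h1 : d - ((d - c) * x + c) = (d - c) * (1 - x) := by ring
    have h2 : (d - c) * x + c - c = (d - c) * x := by ring
    rw [h1, h2, Real.mul_rpow (by linarith) (by linarith [hx.2]),
      Real.mul_rpow (by linarith) hx.1, Real.rpow_add (by linarith)]
    ring
  rw [intervalIntegral.integral_congr heq] at hsub
  rw [intervalIntegral.integral_const_mul] at hsub
  have hbeta : ∫ x in (0:ℝ)..1, (1 - x) ^ (α - 1) * x ^ β =
      Real.Gamma (β + 1) * Real.Gamma α / Real.Gamma (β + 1 + α) := by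
    rw [← realBeta (β + 1) α (by linarith) hα]
    refine intervalIntegral.integral_congr fun x hx => ?_
    simp only [add_sub_cancel_right]
    ring
  rw [hbeta] at hsub
  have := hsub.symm
  rw [smul_eq_mul] at this
  rw [sub_add_cancel] at this
  have h3 : ∫ s in c..d, (d - s) ^ (α - 1) * (s - c) ^ β =
      (d - c) * ((d - c) ^ (α - 1 + β) * (Real.Gamma (β+1) * Real.Gamma α / Real.Gamma (β+1+α))) := by
    field_simp at this ⊢
    linarith [this]
  rw [h3]
  have h4 : (d - c) * (d - c) ^ (α - 1 + β) = (d - c) ^ (α + β) := by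
    nth_rewrite 1 [← Real.rpow_one (d - c)]
    rw [← Real.rpow_add (by linarith : (0:ℝ) < d - c), show 1 + (α - 1 + β) = α + β by ring]
  rw [← mul_assoc, h4, show β + 1 + α = α + β + 1 by ring]
  ring

lemma auxIntegrable {c d α β : ℝ} (hα : 0 < α) (hβ : 0 ≤ β) :
    IntervalIntegrable (fun s => (d - s) ^ (α - 1) * (s - c) ^ β) volume c d := by
  have h1 : IntervalIntegrable (fun s => (d - s) ^ (α - 1)) volume c d := by
    have := (intervalIntegral.intervalIntegrable_rpow' (a := d - d) (b := d - c)
      (r := α - 1) (by linarith)).comp_sub_left d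
    simpa using this.symm
  have h2 : ContinuousOn (fun s => (s - c) ^ β) (uIcc c d) :=
    Continuous.continuousOn (by
      have : Continuous fun s : ℝ => s - c := continuous_id.sub continuous_const
      exact this.rpow_const fun x => Or.inr hβ)
  exact h1.mul_continuousOn h2

lemma derivPos (ψ : ℝ → ℝ) (hψ : ContDiff ℝ 1 ψ) (hmono : StrictMono ψ)
    (hψ' : ∀ x, deriv ψ x ≠ 0) (x : ℝ) : 0 < deriv ψ x := by
  have hd : HasDerivAt ψ (deriv ψ x) x := (hψ.differentiable one_ne_zero x).hasDerivAt
  have ht : Tendsto (slope ψ x) (nhdsWithin x (Set.Ioi x)) (nhds (deriv ψ x)) :=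
    (hasDerivAt_iff_tendsto_slope.mp hd).mono_left
      (nhdsWithin_mono x fun y hy => ne_of_gt hy)
  have h0 : 0 ≤ deriv ψ x :=
    ge_of_tendsto ht (eventually_nhdsWithin_of_forall fun y (hy : x < y) =>
      by rw [slope_def_field]; exact div_nonneg (sub_nonneg.2 (hmono hy).le) (sub_nonneg.2 hy.le))
  exact lt_of_le_of_ne h0 (hψ' x).symm

lemma keyInt (a t : ℝ) (ψ : ℝ → ℝ) (hψ : ContDiff ℝ 1 ψ) (hmono : StrictMono ψ)
    (hψ' : ∀ x, deriv ψ x ≠ 0) {α β : ℝ} (hα : 0 < α) (hα1 : α < 1) (hβ : 0 ≤ β)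
    (hat : a ≤ t) :
    ∫ τ in a..t, deriv ψ τ * (ψ t - ψ τ) ^ (α - 1) * (ψ τ - ψ a) ^ β =
      Real.Gamma (β + 1) * Real.Gamma α / Real.Gamma (α + β + 1) * (ψ t - ψ a) ^ (α + β) := by
  rcases eq_or_lt_of_le hat with rfl | hlt
  · rw [intervalIntegral.integral_same, sub_self, Real.zero_rpow (by positivity), mul_zero]
  have hpos : ∀ x, 0 < deriv ψ x := derivPos ψ hψ hmono hψ'
  set c := ψ a with hc
  set d := ψ t with hd
  have hcd : c < d := hmono hlt
  set g : ℝ → ℝ := fun s => (d - s) ^ (α - 1) * (s - c) ^ β with hg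
  have hcont : ContinuousOn ψ (uIcc a t) := hψ.continuous.continuousOn
  have hff' : ∀ x ∈ Ioo (min a t) (max a t), HasDerivWithinAt ψ (deriv ψ x) (Ioi x) x :=
    fun x _ => ((hψ.differentiable one_ne_zero x).hasDerivAt).hasDerivWithinAt
  have hg_cont : ContinuousOn g (ψ '' Ioo (min a t) (max a t)) := by
    rintro s ⟨τ, hτ, rfl⟩
    rw [min_eq_left hat, max_eq_right hat] at hτ
    have h1 : c < ψ τ := hmono hτ.1
    have h2 : ψ τ < d := hmono hτ.2
    apply ContinuousAt.continuousWithinAt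
    apply ContinuousAt.mul
    · exact ((continuous_const.sub continuous_id).continuousAt).rpow_const
        (Or.inl (by simp only [Pi.sub_apply, id_eq]; exact (sub_pos.2 h2).ne'))
    · exact ((continuous_id.sub continuous_const).continuousAt).rpow_const
        (Or.inl (by simp only [Pi.sub_apply, id_eq]; exact (sub_pos.2 h1).ne'))
  have himg_sub : ψ '' uIcc a t ⊆ uIcc c d := by
    rintro s ⟨τ, hτ, rfl⟩
    rw [uIcc_of_le hat] at hτ
    rw [uIcc_of_le hcd.le]
    exact ⟨hmono.monotone hτ.1, hmono.monotone hτ.2⟩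
  have hg1 : IntegrableOn g (ψ '' uIcc a t) :=
    ((intervalIntegrable_iff' (f := g) (μ := volume)).mp (auxIntegrable hα hβ)).mono_set himg_sub
  -- min and max of deriv ψ on the compact interval
  obtain ⟨τm, hτm, hmin⟩ := (isCompact_Icc (a := a) (b := t)).exists_isMinOn
    (nonempty_Icc.2 hat) ((hψ.continuous_deriv le_rfl).continuousOn)
  obtain ⟨τM, hτM, hmax⟩ := (isCompact_Icc (a := a) (b := t)).exists_isMaxOn
    (nonempty_Icc.2 hat) ((hψ.continuous_deriv le_rfl).continuousOn)
  set m := deriv ψ τm with hm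
  set M := deriv ψ τM with hM
  have hm0 : 0 < m := hpos τm
  -- MVT lower bound
  have hMVT : ∀ τ ∈ Icc a t, m * (t - τ) ≤ ψ t - ψ τ := by
    intro τ hτ
    exact Convex.mul_sub_le_image_sub_of_le_deriv (convex_Icc a t)
      (hψ.continuous.continuousOn)
      (fun x _ => (hψ.differentiable one_ne_zero x).differentiableWithinAt)
      (fun x hx => hmin (interior_subset hx))
      τ hτ t (right_mem_Icc.2 hat) hτ.2
  set C := M * (m ^ (α - 1)) * (d - c) ^ β with hC
  have hg0int : IntervalIntegrable (fun τ => C * (t - τ) ^ (α - 1)) volume a t := by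
    have := (intervalIntegral.intervalIntegrable_rpow' (a := t - t) (b := t - a)
      (r := α - 1) (by linarith)).comp_sub_left t
    simpa using (this.symm.const_mul C)
  have hmeas : AEStronglyMeasurable (fun τ => deriv ψ τ • (g ∘ ψ) τ)
      (volume.restrict (uIcc a t)) := by
    apply Measurable.aestronglyMeasurable
    apply measurable_of_continuousOn_compl_singleton t
    intro τ hτ
    have hτt : τ ≠ t := hτ
    have hne : d - ψ τ ≠ 0 := sub_ne_zero.2 fun h => hτt (hmono.injective h.symm)
    apply ContinuousAt.continuousWithinAt
    show ContinuousAt (fun τ => deriv ψ τ • ((d - ψ τ) ^ (α - 1) * (ψ τ - c) ^ β)) τ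
    simp only [smul_eq_mul]
    exact ((hψ.continuous_deriv le_rfl).continuousAt).mul
      ((((continuous_const.sub hψ.continuous).continuousAt).rpow_const (Or.inl hne)).mul
        (((hψ.continuous.sub continuous_const).continuousAt).rpow_const (Or.inr hβ)))
  have hbound : ∀ τ ∈ uIcc a t, ‖deriv ψ τ • (g ∘ ψ) τ‖ ≤ C * (t - τ) ^ (α - 1) := by
    intro τ hτ
    rw [uIcc_of_le hat] at hτ
    have hψτ1 : c ≤ ψ τ := hmono.monotone hτ.1
    have hψτ2 : ψ τ ≤ d := hmono.monotone hτ.2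
    rcases eq_or_lt_of_le hτ.2 with rfl | hτt
    · simp only [Function.comp, smul_eq_mul, hg, sub_self,
        Real.zero_rpow (by linarith : α - 1 ≠ 0), zero_mul, mul_zero, norm_zero]
      simp [hd, Real.zero_rpow (by linarith : α - 1 ≠ 0)]
    · have hbase : 0 < m * (t - τ) := mul_pos hm0 (by linarith)
      have h1 : (d - ψ τ) ^ (α - 1) ≤ (m * (t - τ)) ^ (α - 1) :=
        Real.rpow_le_rpow_of_nonpos hbase (hMVT τ hτ) (by linarith)
      have h2 : deriv ψ τ ≤ M := hmax hτ
      have h3 : (ψ τ - c) ^ β ≤ (d - c) ^ β :=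
        Real.rpow_le_rpow (by linarith) (by linarith) hβ
      have hnn1 : (0:ℝ) ≤ (d - ψ τ) ^ (α - 1) := Real.rpow_nonneg (by linarith) _
      have hnn2 : (0:ℝ) ≤ (ψ τ - c) ^ β := Real.rpow_nonneg (by linarith) _
      have hnorm : ‖deriv ψ τ • (g ∘ ψ) τ‖ =
          deriv ψ τ * ((d - ψ τ) ^ (α - 1) * (ψ τ - c) ^ β) := by
        rw [Real.norm_eq_abs, abs_of_nonneg]
        · simp [hg, Function.comp, smul_eq_mul]
        · simp only [Function.comp, smul_eq_mul, hg]
          exact mul_nonneg (hpos τ).le (mul_nonneg hnn1 hnn2)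
      rw [hnorm]
      have step1 : deriv ψ τ * ((d - ψ τ) ^ (α - 1) * (ψ τ - c) ^ β) ≤
          M * ((m * (t - τ)) ^ (α - 1) * (d - c) ^ β) := by
        apply mul_le_mul h2 _ (by positivity) (le_trans (hpos τM).le (le_refl M))
        exact mul_le_mul h1 h3 hnn2 (Real.rpow_nonneg hbase.le _)
      refine step1.trans (le_of_eq ?_)
      rw [Real.mul_rpow hm0.le (by linarith)]
      ring
  have hg2 : IntegrableOn (fun x => deriv ψ x • (g ∘ ψ) x) (uIcc a t) := by
    apply Integrable.mono' ((intervalIntegrable_iff' (f := fun τ => C * (t - τ) ^ (α - 1)) (μ := volume)).mp hg0int) hmeas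
    exact ae_restrict_of_forall_mem measurableSet_uIcc hbound
  have hsub := integral_comp_smul_deriv''' hcont hff' hg_cont hg1 hg2
  have hLHS : ∫ τ in a..t, deriv ψ τ * (ψ t - ψ τ) ^ (α - 1) * (ψ τ - ψ a) ^ β =
      ∫ τ in a..t, deriv ψ τ • (g ∘ ψ) τ := by
    refine intervalIntegral.integral_congr fun τ _ => ?_
    simp [hg, hd, hc, Function.comp, smul_eq_mul, mul_assoc]
  rw [hLHS, hsub, betaScaled hcd hα hβ]

lemma derivExpMul (K x : ℝ) : deriv (fun y => Real.exp (-y) * K) x = -Real.exp (-x) * K := by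
  have h1 : HasDerivAt (fun y : ℝ => -y) (-1) x := (hasDerivAt_id x).neg
  have h2 := (h1.exp).mul_const K
  have h3 : HasDerivAt (fun y => Real.exp (-y) * K) (-Real.exp (-x) * K) x := by
    rw [show -Real.exp (-x) * K = Real.exp (-x) * -1 * K by ring]; exact h2
  exact h3.deriv


theorem stmt19 (a : ℝ) (ψ : ℝ → ℝ) (hψ : ContDiff ℝ 1 ψ)
    (hmono : StrictMono ψ) (hψ' : ∀ x, deriv ψ x ≠ 0)
    (α : ℝ) (hα : 0 < α) (hα1 : α < 1)
    (u : ℕ → ℝ → ℝ → ℝ)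
    (h0 : ∀ x t, u 0 x t = Real.exp (-x))
    (hrec : ∀ m : ℕ, 1 ≤ m → ∀ x t,
      u m x t =
        -psiInt α ψ a
          (fun τ =>
            (∑ i ∈ Finset.range m, u i x τ * deriv (fun y => u (m - 1 - i) y τ) x) -
              u (m - 1) x τ +
              ∑ i ∈ Finset.range m, u i x τ * u (m - 1 - i) x τ) t) :
    ∀ m : ℕ, ∀ x, ∀ t, a ≤ t →
      u m x t = Real.exp (-x) * (ψ t - ψ a) ^ ((m : ℝ) * α) / Real.Gamma (m * α + 1) := by
  intro m
  induction m using Nat.strong_induction_on with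
  | _ m ih =>
  intro x t ht
  rcases Nat.eq_zero_or_pos m with rfl | hm
  · simp [h0, Real.Gamma_one]
  have hm1 : 1 ≤ m := hm
  set β : ℝ := ((m - 1 : ℕ) : ℝ) * α with hβdef
  have hβnn : 0 ≤ β := mul_nonneg (Nat.cast_nonneg _) hα.le
  have hβ1pos : (0:ℝ) < Real.Gamma (β + 1) := Real.Gamma_pos_of_pos (by linarith)
  have hαG : (0:ℝ) < Real.Gamma α := Real.Gamma_pos_of_pos hα
  have hint : ∀ τ ∈ uIcc a t,
      deriv ψ τ * (ψ t - ψ τ) ^ (α - 1) *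
        ((∑ i ∈ Finset.range m, u i x τ * deriv (fun y => u (m - 1 - i) y τ) x) -
          u (m - 1) x τ +
          ∑ i ∈ Finset.range m, u i x τ * u (m - 1 - i) x τ) =
      (-(Real.exp (-x) / Real.Gamma (β + 1))) *
        (deriv ψ τ * (ψ t - ψ τ) ^ (α - 1) * (ψ τ - ψ a) ^ β) := by
    intro τ hτ
    rw [uIcc_of_le ht] at hτ
    have haτ : a ≤ τ := hτ.1
    have hS : (∑ i ∈ Finset.range m, u i x τ * deriv (fun y => u (m - 1 - i) y τ) x) +
        ∑ i ∈ Finset.range m, u i x τ * u (m - 1 - i) x τ = 0 := by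
      rw [← Finset.sum_add_distrib]
      apply Finset.sum_eq_zero
      intro i hi
      have hi' : i < m := Finset.mem_range.mp hi
      have hd : deriv (fun y => u (m - 1 - i) y τ) x =
          -Real.exp (-x) *
            ((ψ τ - ψ a) ^ (((m - 1 - i : ℕ) : ℝ) * α) /
              Real.Gamma (((m - 1 - i : ℕ) : ℝ) * α + 1)) := by
        have hfun : (fun y => u (m - 1 - i) y τ) =
            fun y => Real.exp (-y) *
              ((ψ τ - ψ a) ^ (((m - 1 - i : ℕ) : ℝ) * α) /
                Real.Gamma (((m - 1 - i : ℕ) : ℝ) * α + 1)) :=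
          funext fun y => by rw [ih (m - 1 - i) (by omega) y τ haτ]; ring
        rw [hfun, derivExpMul]
      rw [hd, ih i (by omega) x τ haτ, ih (m - 1 - i) (by omega) x τ haτ]
      ring
    have hu : u (m - 1) x τ = Real.exp (-x) * (ψ τ - ψ a) ^ β / Real.Gamma (β + 1) :=
      ih (m - 1) (by omega) x τ haτ
    have hF : (∑ i ∈ Finset.range m, u i x τ * deriv (fun y => u (m - 1 - i) y τ) x) -
        u (m - 1) x τ +
        ∑ i ∈ Finset.range m, u i x τ * u (m - 1 - i) x τ = -(u (m - 1) x τ) := by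
      linarith [hS]
    rw [hF, hu]
    ring
  rw [hrec m hm1 x t]
  simp only [psiInt]
  rw [intervalIntegral.integral_congr hint, intervalIntegral.integral_const_mul,
    keyInt a t ψ hψ hmono hψ' hα hα1 hβnn ht]
  have hcast : α + β = (m : ℝ) * α := by
    rw [hβdef, Nat.cast_sub hm1]
    push_cast
    ring
  rw [hcast]
  have hGm : (0:ℝ) < Real.Gamma ((m : ℝ) * α + 1) :=
    Real.Gamma_pos_of_pos (by positivity)
  field_simp
end
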